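/- arXiv:2001.00276 — 11 statements merged into one kernel-verified Lean document; each statement's English description precedes it below -/
import Mathlib

section
/- (Proper separation theorem.) Let X be a real vector space, Ω ⊆ X convex with core(Ω) ≠ ∅, and x₀ ∈ X with x₀ ∉ Ω. Then there exists a nonzero linear function f : X → ℝ such that f(x) ≤ f(x₀) for all x ∈ Ω and f(x̄) < f(x₀) for some x̄ ∈ Ω. Moreover, in the extreme case where Ω = core(Ω), there exists a nonzero linear function f : X → ℝ with f(x) < f(x₀) for all x ∈ Ω. -/
/-- The algebraic core of a set `Ω` in a real vector space. -/
def algCore {X : Type*} [AddCommGroup X] [Module ℝ X] (Ω : Set X) : Set X :=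
  {x | x ∈ Ω ∧ ∀ v : X, ∃ δ > (0 : ℝ), ∀ t : ℝ, |t| < δ → x + t • v ∈ Ω}

theorem proper_separation {X : Type*} [AddCommGroup X] [Module ℝ X]
    (Ω : Set X) (hΩ : Convex ℝ Ω) (hcore : (algCore Ω).Nonempty)
    (x₀ : X) (hx₀ : x₀ ∉ Ω) :
    (∃ f : X →ₗ[ℝ] ℝ, f ≠ 0 ∧ (∀ x ∈ Ω, f x ≤ f x₀) ∧ ∃ xb ∈ Ω, f xb < f x₀) ∧
    (algCore Ω = Ω → ∃ f : X →ₗ[ℝ] ℝ, f ≠ 0 ∧ ∀ x ∈ Ω, f x < f x₀) := by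
  obtain ⟨a, haΩ, habs⟩ := hcore
  -- Translate so that the core point is the origin.
  set C : Set X := {x | a + x ∈ Ω} with hCdef
  have hmemC : ∀ x : X, x ∈ C ↔ a + x ∈ Ω := fun x => Iff.rfl
  have hCconv : Convex ℝ C := by
    intro x hx y hy s t hs ht hst
    have h1 := hΩ ((hmemC x).1 hx) ((hmemC y).1 hy) hs ht hst
    rw [hmemC]
    have heq : s • (a + x) + t • (a + y) = (s + t) • a + (s • x + t • y) := by module
    rw [heq, hst, one_smul] at h1
    exact h1
  have h0C : (0 : X) ∈ C := by rw [hmemC]; simpa using haΩ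
  have hCabs : Absorbent ℝ C := by
    intro v
    rw [absorbs_iff_norm]
    obtain ⟨δ, hδ, hδv⟩ := habs v
    refine ⟨2/δ, fun c hc => ?_⟩
    have hc0 : c ≠ 0 := by
      intro h; rw [h] at hc; simp at hc
      have : 0 < 2/δ := by positivity
      linarith
    rw [Set.singleton_subset_iff]
    refine ⟨c⁻¹ • v, ?_, by dsimp only; rw [smul_smul, mul_inv_cancel₀ hc0, one_smul]⟩
    rw [hmemC]
    refine hδv _ ?_
    rw [abs_inv]
    have habs0 : (0:ℝ) < |c| := abs_pos.mpr hc0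
    rw [inv_lt_comm₀ habs0 hδ]
    rw [Real.norm_eq_abs] at hc
    calc δ⁻¹ < 2/δ := by rw [div_eq_mul_inv]; nlinarith [inv_pos.mpr hδ]
      _ ≤ |c| := hc
  -- The separating direction
  set b : X := x₀ - a with hb
  have hbne : b ≠ 0 := by
    intro h
    have : x₀ = a := by rwa [hb, sub_eq_zero] at h
    exact hx₀ (this ▸ haΩ)
  have hbC : b ∉ C := by
    intro h
    have h' : a + b ∈ Ω := (hmemC b).1 h
    have : a + b = x₀ := by rw [hb]; abel
    exact hx₀ (this ▸ h')
  have hone : 1 ≤ gauge C b :=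
    one_le_gauge_of_notMem (hCconv.starConvex h0C) (hCabs b) hbC
  -- Hahn–Banach extension of t • b ↦ t * gauge C b
  have H : ∀ c : ℝ, c • b = 0 → c • gauge C b = 0 := fun c hc => by
    rcases smul_eq_zero.1 hc with h | h
    · rw [h, zero_smul]
    · exact absurd h hbne
  have hple : ∀ x : (LinearPMap.mkSpanSingleton' (σ := RingHom.id ℝ) b (gauge C b) H).domain,
      (LinearPMap.mkSpanSingleton' (σ := RingHom.id ℝ) b (gauge C b) H) x ≤ gauge C (x : X) := by
    rintro ⟨x, hx⟩
    obtain ⟨t, ht⟩ := Submodule.mem_span_singleton.1 hx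
    subst ht
    rw [LinearPMap.mkSpanSingleton'_apply]
    rcases le_or_gt 0 t with ht | ht
    · rw [gauge_smul_of_nonneg ht]; exact le_rfl
    · have hlt : t • gauge C b < 0 :=
        smul_neg_of_neg_of_pos ht (lt_of_lt_of_le zero_lt_one hone)
      exact hlt.le.trans (gauge_nonneg _)
  obtain ⟨g, hg1, hg2⟩ := exists_extension_of_le_sublinear
    (LinearPMap.mkSpanSingleton' (σ := RingHom.id ℝ) b (gauge C b) H) (gauge C)
    (fun c hc x => by rw [gauge_smul_of_nonneg hc.le]; rfl)
    (gauge_add_le hCconv hCabs) hple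
  have hgb : g b = gauge C b := by
    have := hg1 ⟨b, Submodule.mem_span_singleton_self b⟩
    exact this.trans (LinearPMap.mkSpanSingleton'_apply_self (σ := RingHom.id ℝ) b (gauge C b) H _)
  have hgb1 : 1 ≤ g b := hgb ▸ hone
  have hgne : g ≠ 0 := by
    intro h
    rw [h] at hgb1
    simp at hgb1
    linarith
  -- Main inequality: for x ∈ Ω, g x ≤ g a + 1 ≤ g x₀
  have hkey : ∀ x ∈ Ω, g x ≤ g a + 1 := by
    intro x hx
    have hxC : x - a ∈ C := by
      rw [hmemC]
      have : a + (x - a) = x := by abel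
      rwa [this]
    have := (hg2 (x - a)).trans (gauge_le_one_of_mem hxC)
    rw [map_sub] at this
    linarith
  have hx₀g : g a + 1 ≤ g x₀ := by
    have h' : g b = g x₀ - g a := by rw [hb, map_sub]
    linarith [hgb1]
  constructor
  · refine ⟨g, hgne, fun x hx => (hkey x hx).trans hx₀g, a, haΩ, ?_⟩
    linarith
  · intro hΩcore
    refine ⟨g, hgne, fun x hx => ?_⟩
    have hx' : x ∈ algCore Ω := by rw [hΩcore]; exact hx
    obtain ⟨δ, hδ, hδv⟩ := hx'.2 b
    have hmem : x + (δ/2) • b ∈ Ω := hδv (δ/2) (by rw [abs_of_pos (by linarith)]; linarith)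
    have h1 : g (x + (δ/2) • b) ≤ g x₀ := (hkey _ hmem).trans hx₀g
    have h2 : g (x + (δ/2) • b) = g x + (δ/2) * g b := by
      rw [map_add, map_smul]; rfl
    nlinarith [hgb1]
end

section
/- (Characterization of proper separation of a point from a convex set.) Let X be a real vector space, Ω ⊆ X convex with core(Ω) ≠ ∅, and x₀ ∈ X. Then the following are equivalent: (a) Ω and {x₀} are separated, i.e., there is a nonzero linear f : X → ℝ with f(x) ≤ f(x₀) for all x ∈ Ω; (b) Ω and {x₀} are properly separated, i.e., there is a nonzero linear f : X → ℝ with f(x) ≤ f(x₀) for all x ∈ Ω and f(x̄) < f(x₀) for some x̄ ∈ Ω; (c) x₀ ∉ core(Ω). -/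
open Set Filter

theorem proper_separation_characterization {X : Type*} [AddCommGroup X] [Module ℝ X]
    (Ω : Set X) (hΩ : Convex ℝ Ω) (hcore : (algCore Ω).Nonempty) (x₀ : X) :
    ((∃ f : X →ₗ[ℝ] ℝ, f ≠ 0 ∧ ∀ x ∈ Ω, f x ≤ f x₀) ↔
      (∃ f : X →ₗ[ℝ] ℝ, f ≠ 0 ∧ (∀ x ∈ Ω, f x ≤ f x₀) ∧ ∃ xb ∈ Ω, f xb < f x₀)) ∧
    ((∃ f : X →ₗ[ℝ] ℝ, f ≠ 0 ∧ (∀ x ∈ Ω, f x ≤ f x₀) ∧ ∃ xb ∈ Ω, f xb < f x₀) ↔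
      x₀ ∉ algCore Ω) := by
  obtain ⟨a, haΩ, hacore⟩ := hcore
  -- (a) → (b): if f separates, then f is strict at the core point a
  have key_ab : ∀ f : X →ₗ[ℝ] ℝ, f ≠ 0 → (∀ x ∈ Ω, f x ≤ f x₀) → f a < f x₀ := by
    intro f hf hle
    rcases lt_or_eq_of_le (hle a haΩ) with h | h
    · exact h
    · exfalso
      obtain ⟨v, hv⟩ : ∃ v, f v ≠ 0 := by
        by_contra h'; push_neg at h'; exact hf (LinearMap.ext fun x => h' x)
      obtain ⟨δ, hδ, hδ'⟩ := hacore v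
      have h1 : ∀ t : ℝ, |t| < δ → t * f v ≤ 0 := by
        intro t ht
        have := hle _ (hδ' t ht)
        rw [map_add, map_smul, smul_eq_mul, ← h] at this
        linarith
      have h2 := h1 (δ/2) (by rw [abs_of_pos] <;> linarith)
      have h3 := h1 (-(δ/2)) (by rw [abs_neg, abs_of_pos] <;> linarith)
      rcases hv.lt_or_gt with h | h <;> nlinarith
  have hab : (∃ f : X →ₗ[ℝ] ℝ, f ≠ 0 ∧ ∀ x ∈ Ω, f x ≤ f x₀) →
      (∃ f : X →ₗ[ℝ] ℝ, f ≠ 0 ∧ (∀ x ∈ Ω, f x ≤ f x₀) ∧ ∃ xb ∈ Ω, f xb < f x₀) := by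
    rintro ⟨f, hf, hle⟩
    exact ⟨f, hf, hle, a, haΩ, key_ab f hf hle⟩
  -- (b) → (c)
  have hbc : (∃ f : X →ₗ[ℝ] ℝ, f ≠ 0 ∧ (∀ x ∈ Ω, f x ≤ f x₀) ∧ ∃ xb ∈ Ω, f xb < f x₀) →
      x₀ ∉ algCore Ω := by
    rintro ⟨f, hf, hle, xb, hxb, hlt⟩ ⟨hx₀Ω, hx₀core⟩
    obtain ⟨δ, hδ, hδ'⟩ := hx₀core (xb - x₀)
    have := hle _ (hδ' (-(δ/2)) (by rw [abs_neg, abs_of_pos] <;> linarith))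
    rw [map_add, map_smul, smul_eq_mul, map_sub] at this
    nlinarith
  -- (c) → (a): Hahn–Banach via the gauge of the translate of Ω by -a
  have hca : x₀ ∉ algCore Ω → (∃ f : X →ₗ[ℝ] ℝ, f ≠ 0 ∧ ∀ x ∈ Ω, f x ≤ f x₀) := by
    intro hx₀
    set S : Set X := {y | y + a ∈ Ω} with hSdef
    have h0S : (0 : X) ∈ S := by simpa [hSdef] using haΩ
    have hSconv : Convex ℝ S := by
      intro y hy z hz s t hs ht hst
      have ht' : t = 1 - s := by linarith
      subst ht'
      have : (s • y + (1 - s) • z) + a = s • (y + a) + (1 - s) • (z + a) := by module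
      show (s • y + (1 - s) • z) + a ∈ Ω
      rw [this]
      exact hΩ hy hz hs ht (by ring)
    have hSabs : Absorbent ℝ S := by
      rw [absorbent_iff_eventually_nhdsNE_zero]
      intro v
      obtain ⟨δ, hδ, hδ'⟩ := hacore v
      have hev : ∀ᶠ c : ℝ in nhds 0, c • v ∈ S := by
        filter_upwards [Metric.ball_mem_nhds (0 : ℝ) hδ] with c hc
        have hc' : |c| < δ := by simpa [Real.dist_eq] using hc
        show c • v + a ∈ Ω
        have := hδ' c hc'
        rwa [add_comm] at this
      exact hev.filter_mono nhdsWithin_le_nhds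
    -- the crucial estimate: gauge S (x₀ - a) ≥ 1
    have hgauge1 : (1 : ℝ) ≤ gauge S (x₀ - a) := by
      by_contra hlt
      push_neg at hlt
      obtain ⟨r, hr0, hr1, hmem⟩ := exists_lt_of_gauge_lt hSabs hlt
      obtain ⟨z, hzS, hz⟩ := hmem
      have hzΩ : z + a ∈ Ω := hzS
      have hr1' : (0 : ℝ) < 1 - r := by linarith
      apply hx₀
      have hz' : r • z = x₀ - a := hz
      have hx₀eq : x₀ = r • z + a := by rw [hz']; abel
      constructor
      · have : x₀ = r • (z + a) + (1 - r) • a := by rw [hx₀eq]; module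
        rw [this]
        exact hΩ hzΩ haΩ hr0.le hr1'.le (by ring)
      · intro v
        obtain ⟨δ, hδ, hδ'⟩ := hacore v
        refine ⟨(1 - r) * δ, by positivity, fun t ht => ?_⟩
        have hs : |t / (1 - r)| < δ := by
          rw [abs_div, abs_of_pos hr1', div_lt_iff₀ hr1']
          linarith [ht, abs_nonneg t]
        have hmem' := hδ' (t / (1 - r)) hs
        have : x₀ + t • v = r • (z + a) + (1 - r) • (a + (t / (1 - r)) • v) := by
          rw [hx₀eq, smul_add, smul_add, smul_smul,
            mul_div_cancel₀ _ (ne_of_gt hr1')]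
          module
        rw [this]
        exact hΩ hzΩ hmem' hr0.le hr1'.le (by ring)
    have hne : x₀ - a ≠ 0 := by
      intro h
      have : x₀ = a := by
        have := sub_eq_zero.mp h; exact this
      exact hx₀ (this ▸ ⟨haΩ, hacore⟩)
    -- Hahn–Banach extension
    let f : X →ₗ.[ℝ] ℝ := LinearPMap.mkSpanSingleton (x₀ - a) (gauge S (x₀ - a)) hne
    have hext := exists_extension_of_le_sublinear f (gauge S)
      (fun c hc => gauge_smul_of_nonneg hc.le) (gauge_add_le hSconv hSabs) ?_
    · obtain ⟨g, hg1, hg2⟩ := hext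
      have hgx : g (x₀ - a) = gauge S (x₀ - a) := by
        rw [← f.domain.coe_mk (x₀ - a) (Submodule.mem_span_singleton_self _), hg1]
        exact LinearPMap.mkSpanSingleton'_apply_self _ _ _ _
      refine ⟨g, ?_, ?_⟩
      · intro h
        rw [h] at hgx
        simp only [LinearMap.zero_apply] at hgx
        linarith
      · intro x hx
        have hxS : x - a ∈ S := by
          show (x - a) + a ∈ Ω
          simpa using hx
        have h1 : g (x - a) ≤ 1 := (hg2 (x - a)).trans (gauge_le_one_of_mem hxS)
        have h2 : (1 : ℝ) ≤ g (x₀ - a) := by rw [hgx]; exact hgauge1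
        rw [map_sub] at h1
        rw [map_sub] at h2
        linarith
    · rintro ⟨x, hx⟩
      obtain ⟨y, rfl⟩ := Submodule.mem_span_singleton.1 hx
      rw [LinearPMap.mkSpanSingleton'_apply]
      obtain h | h := le_or_gt y 0
      · have h1 : y • gauge S (x₀ - a) ≤ 0 := by
          rw [smul_eq_mul]
          exact mul_nonpos_of_nonpos_of_nonneg h (gauge_nonneg _)
        exact h1.trans (gauge_nonneg _)
      · rw [gauge_smul_of_nonneg h.le]
        exact le_rfl
  constructor
  · exact ⟨hab, fun ⟨f, hf, hle, _⟩ => ⟨f, hf, hle⟩⟩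
  · exact ⟨hbc, fun hc => hab (hca hc)⟩
end

section
/- Let X be a real vector space and Ω ⊆ X convex. If a ∈ core(Ω) and b ∈ lin(Ω), then λ•a + (1−λ)•b ∈ core(Ω) for every λ with 0 < λ ≤ 1, i.e., the half-open interval [a,b) is contained in core(Ω). -/
/-- The algebraic closure (`lin`) of a set `Ω`. -/
def algLin {X : Type*} [AddCommGroup X] [Module ℝ X] (Ω : Set X) : Set X :=
  {x | ∃ w ∈ Ω, ∀ t : ℝ, 0 ≤ t → t < 1 → (1 - t) • w + t • x ∈ Ω}

theorem segment_core_lin {X : Type*} [AddCommGroup X] [Module ℝ X]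
    (Ω : Set X) (hΩ : Convex ℝ Ω) (a b : X)
    (ha : a ∈ algCore Ω) (hb : b ∈ algLin Ω) :
    ∀ lam : ℝ, 0 < lam → lam ≤ 1 → lam • a + (1 - lam) • b ∈ algCore Ω := by
  obtain ⟨haΩ, hacore⟩ := ha
  obtain ⟨w, hw, hseg⟩ := hb
  obtain ⟨δ1, hδ1, h1⟩ := hacore (b - w)
  intro lam hl0 hl1
  set c : ℝ := 1 - lam with hc
  have hc0 : 0 ≤ c := by simp [hc]; linarith
  have key : ∀ v : X, ∃ δ > (0:ℝ), ∀ s : ℝ, |s| < δ →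
      lam • a + c • b + s • v ∈ Ω := by
    intro v
    obtain ⟨δ2, hδ2, h2⟩ := hacore v
    set m : ℝ := min 1 (lam * δ1 / (4 * (c + 1))) with hm
    have hm0 : 0 < m := by
      apply lt_min one_pos
      positivity
    have hm1 : m ≤ 1 := min_le_left _ _
    have hbt : (1 - (1 - m)) • w + (1 - m) • b ∈ Ω :=
      hseg (1 - m) (by linarith) (by linarith)
    set r : ℝ := c * m / lam with hr
    have hr0 : 0 ≤ r := by positivity
    have hcm : c * m ≤ lam * δ1 / 4 := by
      have h1 : m ≤ lam * δ1 / (4 * (c + 1)) := min_le_right _ _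
      have h2 : c * m ≤ c * (lam * δ1 / (4 * (c + 1))) :=
        mul_le_mul_of_nonneg_left h1 hc0
      have h3 : m * (4 * (c + 1)) ≤ lam * δ1 := by
        rw [← le_div_iff₀ (by positivity)]; exact h1
      nlinarith [hm0.le]
    have hr2 : 2 * r < δ1 := by
      have h4 : 2 * (c * m) < δ1 * lam := by nlinarith
      have h5 : 2 * r = 2 * (c * m) / lam := by rw [hr]; ring
      rw [h5, div_lt_iff₀ hl0]
      exact h4
    refine ⟨lam * δ2 / 2, by positivity, fun s hs => ?_⟩
    have hA : a + (2 * r) • (b - w) ∈ Ω := by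
      apply h1
      rw [abs_of_nonneg (by linarith)]
      linarith
    have hB : a + (2 * s / lam) • v ∈ Ω := by
      apply h2
      rw [abs_div, abs_of_pos hl0, div_lt_iff₀ hl0, abs_mul]
      rw [abs_two]
      nlinarith [abs_nonneg s]
    have hM : (1/2 : ℝ) • (a + (2 * r) • (b - w)) + (1/2 : ℝ) • (a + (2 * s / lam) • v) ∈ Ω :=
      hΩ hA hB (by norm_num) (by norm_num) (by norm_num)
    have hfin := hΩ hM hbt hl0.le hc0 (by ring)
    have heq : lam • ((1/2 : ℝ) • (a + (2 * r) • (b - w)) + (1/2 : ℝ) • (a + (2 * s / lam) • v))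
        + c • ((1 - (1 - m)) • w + (1 - m) • b) = lam • a + c • b + s • v := by
      have hlr : lam * r = c * m := by
        rw [hr]; field_simp
      match_scalars <;> field_simp <;> linarith [hlr]
    rwa [heq] at hfin
  constructor
  · obtain ⟨δ, hδ, h⟩ := key 0
    have := h 0 (by simpa using hδ)
    simpa using this
  · intro v
    obtain ⟨δ, hδ, h⟩ := key v
    exact ⟨δ, hδ, h⟩
end

section
/- Let X and Y be real vector spaces, Ω ⊆ X convex, and A : X → Y a surjective linear map. Then A(core(Ω)) ⊆ core(A(Ω)), where A(S) denotes the image of S under A. If in addition core(Ω) ≠ ∅, then A(core(Ω)) = core(A(Ω)). -/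
lemma algCore_comb {X : Type*} [AddCommGroup X] [Module ℝ X] {Ω : Set X}
    (hΩ : Convex ℝ Ω) {x₀ z : X} (hx₀ : x₀ ∈ algCore Ω) (hz : z ∈ Ω)
    {l : ℝ} (hl0 : 0 < l) (hl1 : l ≤ 1) : l • x₀ + (1 - l) • z ∈ algCore Ω := by
  refine ⟨hΩ hx₀.1 hz hl0.le (sub_nonneg.mpr hl1) (by ring), fun v => ?_⟩
  obtain ⟨δ, hδ, h⟩ := hx₀.2 (l⁻¹ • v)
  refine ⟨δ, hδ, fun t ht => ?_⟩
  have := hΩ (h t ht) hz hl0.le (sub_nonneg.mpr hl1) (by ring)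
  have heq : l • (x₀ + t • l⁻¹ • v) + (1 - l) • z = l • x₀ + (1 - l) • z + t • v := by
    have : l • (t • l⁻¹ • v) = t • v := by
      rw [smul_smul, smul_smul, mul_comm l t, mul_assoc, mul_inv_cancel₀ hl0.ne', mul_one]
    rw [smul_add, this]; abel
  rwa [heq] at this

theorem image_core_surjective {X Y : Type*} [AddCommGroup X] [Module ℝ X]
    [AddCommGroup Y] [Module ℝ Y]
    (Ω : Set X) (hΩ : Convex ℝ Ω) (A : X →ₗ[ℝ] Y) (hA : Function.Surjective A) :
    A '' algCore Ω ⊆ algCore (A '' Ω) ∧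
      ((algCore Ω).Nonempty → A '' algCore Ω = algCore (A '' Ω)) := by
  have h1 : A '' algCore Ω ⊆ algCore (A '' Ω) := by
    rintro y ⟨x, ⟨hxΩ, hx⟩, rfl⟩
    refine ⟨⟨x, hxΩ, rfl⟩, fun w => ?_⟩
    obtain ⟨v, rfl⟩ := hA w
    obtain ⟨δ, hδ, h⟩ := hx v
    exact ⟨δ, hδ, fun t ht => ⟨x + t • v, h t ht, by simp⟩⟩
  refine ⟨h1, fun ⟨x₀, hx₀⟩ => h1.antisymm ?_⟩
  rintro y ⟨⟨x, hx, rfl⟩, hcore⟩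
  obtain ⟨δ, hδ, h⟩ := hcore (A x - A x₀)
  set t := δ / 2 with ht
  have ht0 : 0 < t := by positivity
  have htδ : |t| < δ := by rw [abs_of_pos ht0]; linarith
  obtain ⟨z, hz, hAz⟩ := h t htδ
  set l := t / (1 + t) with hl
  have hl0 : 0 < l := by positivity
  have hl1 : l ≤ 1 := by
    rw [hl, div_le_one (by linarith)]; linarith
  refine ⟨l • x₀ + (1 - l) • z, algCore_comb hΩ hx₀ hz hl0 hl1, ?_⟩
  have h1t : (1 : ℝ) + t ≠ 0 := by positivity
  rw [map_add, map_smul, map_smul, hAz]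
  rw [hl]
  match_scalars <;> field_simp <;> ring
end

section
/- (Algebraic cores of convex graphs.) Let X and Y be real vector spaces, F : X ⇉ Y a set-valued mapping whose graph gph(F) := {(x,y) | y ∈ F(x)} is a convex subset of X × Y, and suppose core(gph(F)) ≠ ∅. Then core(gph(F)) = {(x,y) ∈ X × Y | x ∈ core(dom(F)) and y ∈ core(F(x))}, where dom(F) := {x ∈ X | F(x) ≠ ∅}. -/
/-- The graph of a set-valued mapping `F : X ⇉ Y`. -/
def gph {X Y : Type*} (F : X → Set Y) : Set (X × Y) := {p | p.2 ∈ F p.1}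

/-- The domain of a set-valued mapping `F : X ⇉ Y`. -/
def dom {X Y : Type*} (F : X → Set Y) : Set X := {x | (F x).Nonempty}

lemma combo_mem_algCore {X : Type*} [AddCommGroup X] [Module ℝ X] {S : Set X}
    (hS : Convex ℝ S) {a b : X} (ha : a ∈ algCore S) (hb : b ∈ S)
    {l : ℝ} (h0 : 0 < l) (h1 : l ≤ 1) : l • a + (1 - l) • b ∈ algCore S := by
  constructor
  · exact hS ha.1 hb h0.le (by linarith) (by ring)
  · intro v
    obtain ⟨δ, hδ, hd⟩ := ha.2 v
    refine ⟨l * δ, by positivity, fun t ht => ?_⟩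
    have hne : l ≠ 0 := h0.ne'
    have h1' : a + (t / l) • v ∈ S := by
      refine hd (t / l) ?_
      rw [abs_div, abs_of_pos h0, div_lt_iff₀ h0, mul_comm]
      exact ht
    have hmem := hS (a := l) (b := 1 - l) h1' hb h0.le (by linarith) (by ring)
    have heq : l • (a + (t / l) • v) + (1 - l) • b = l • a + (1 - l) • b + t • v := by
      rw [smul_add, smul_smul, mul_div_cancel₀ _ hne]
      abel
    rwa [heq] at hmem

lemma combo_aux {Y : Type*} [AddCommGroup Y] [Module ℝ Y] (y y' : Y) {r : ℝ}
    (hr : (0:ℝ) < 1 + r) :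
    (r / (1 + r)) • y' + (1 - r / (1 + r)) • (y + r • (y - y')) = y := by
  match_scalars <;> field_simp <;> ring

theorem core_of_convex_graph {X Y : Type*} [AddCommGroup X] [Module ℝ X]
    [AddCommGroup Y] [Module ℝ Y]
    (F : X → Set Y) (hF : Convex ℝ (gph F)) (hcore : (algCore (gph F)).Nonempty) :
    algCore (gph F) = {p : X × Y | p.1 ∈ algCore (dom F) ∧ p.2 ∈ algCore (F p.1)} := by
  ext ⟨x, y⟩
  constructor
  · rintro ⟨hxy, hdir⟩
    refine ⟨⟨⟨y, hxy⟩, fun v => ?_⟩, ⟨hxy, fun w => ?_⟩⟩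
    · obtain ⟨δ, hδ, hd⟩ := hdir (v, 0)
      refine ⟨δ, hδ, fun t ht => ⟨y, ?_⟩⟩
      have := hd t ht
      simpa [gph] using this
    · obtain ⟨δ, hδ, hd⟩ := hdir (0, w)
      refine ⟨δ, hδ, fun t ht => ?_⟩
      have := hd t ht
      simpa [gph] using this
  · rintro ⟨hx, hy⟩
    obtain ⟨⟨x₀, y₀⟩, hz⟩ := hcore
    -- step 1: find u ∈ dom F beyond x in direction x - x₀
    obtain ⟨δ, hδ, hd⟩ := hx.2 (x - x₀)
    have hspos : (0:ℝ) < δ / 2 := by positivity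
    obtain ⟨w, hw⟩ : (F (x + (δ / 2) • (x - x₀))).Nonempty :=
      hd (δ / 2) (by rw [abs_of_pos hspos]; linarith)
    have h1s : (0:ℝ) < 1 + δ / 2 := by linarith
    have hlpos : 0 < δ / 2 / (1 + δ / 2) := by positivity
    have hl1 : δ / 2 / (1 + δ / 2) < 1 := by rw [div_lt_one h1s]; linarith
    have hkey : (δ / 2 / (1 + δ / 2)) • ((x₀, y₀) : X × Y)
          + (1 - δ / 2 / (1 + δ / 2)) • (x + (δ / 2) • (x - x₀), w)
        = (x, (δ / 2 / (1 + δ / 2)) • y₀ + (1 - δ / 2 / (1 + δ / 2)) • w) := by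
      refine Prod.ext ?_ rfl
      exact combo_aux x x₀ h1s
    have hcore1 : ((x, (δ / 2 / (1 + δ / 2)) • y₀ + (1 - δ / 2 / (1 + δ / 2)) • w) : X × Y)
        ∈ algCore (gph F) := by
      rw [← hkey]
      exact combo_mem_algCore hF hz hw hlpos hl1.le
    generalize hy'def : (δ / 2 / (1 + δ / 2)) • y₀ + (1 - δ / 2 / (1 + δ / 2)) • w = y' at hcore1
    -- step 2: find y'' ∈ F x beyond y in direction y - y'
    obtain ⟨ε, hε, he⟩ := hy.2 (y - y')
    have hrpos : (0:ℝ) < ε / 2 := by positivity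
    have hy'' : y + (ε / 2) • (y - y') ∈ F x :=
      he (ε / 2) (by rw [abs_of_pos hrpos]; linarith)
    have h1r : (0:ℝ) < 1 + ε / 2 := by linarith
    have hmpos : 0 < ε / 2 / (1 + ε / 2) := by positivity
    have hm1 : ε / 2 / (1 + ε / 2) < 1 := by rw [div_lt_one h1r]; linarith
    have hkey2 : (ε / 2 / (1 + ε / 2)) • ((x, y') : X × Y)
          + (1 - ε / 2 / (1 + ε / 2)) • (x, y + (ε / 2) • (y - y')) = (x, y) := by
      refine Prod.ext ?_ ?_
      · show (ε / 2 / (1 + ε / 2)) • x + (1 - ε / 2 / (1 + ε / 2)) • x = x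
        module
      · exact combo_aux y y' h1r
    have hfin := combo_mem_algCore hF hcore1
      (show ((x, y + (ε / 2) • (y - y')) : X × Y) ∈ gph F from hy'') hmpos hm1.le
    rwa [hkey2] at hfin
end

section
/- Let X be a real vector space and Ω₁, Ω₂ ⊆ X convex sets with core(Ω₁) ≠ ∅ and core(Ω₂) ≠ ∅. Then core(Ω₁ − Ω₂) = core(Ω₁) − core(Ω₂), where Ω₁ − Ω₂ := {x₁ − x₂ | x₁ ∈ Ω₁, x₂ ∈ Ω₂}. -/
open Pointwise

lemma core_seg {X : Type*} [AddCommGroup X] [Module ℝ X] {Ω : Set X} (h : Convex ℝ Ω)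
    {c a : X} (hc : c ∈ algCore Ω) (ha : a ∈ Ω) {l : ℝ} (hl0 : 0 < l) (hl1 : l ≤ 1) :
    (1 - l) • a + l • c ∈ algCore Ω := by
  constructor
  · exact h ha hc.1 (by linarith) hl0.le (by ring)
  · intro v
    obtain ⟨δ, hδ, hδ'⟩ := hc.2 v
    refine ⟨l * δ, by positivity, fun t ht => ?_⟩
    have h1 : |t / l| < δ := by
      rw [abs_div, abs_of_pos hl0, div_lt_iff₀ hl0]
      linarith [ht]
    have h2 : (1 - l) • a + l • (c + (t / l) • v) ∈ Ω :=
      h ha (hδ' (t / l) h1) (by linarith) hl0.le (by ring)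
    have h3 : l * (t / l) = t := by field_simp
    rw [smul_add, smul_smul, h3] at h2
    convert h2 using 1
    abel

theorem core_sub {X : Type*} [AddCommGroup X] [Module ℝ X]
    (Ω₁ Ω₂ : Set X) (h₁ : Convex ℝ Ω₁) (h₂ : Convex ℝ Ω₂)
    (hc₁ : (algCore Ω₁).Nonempty) (hc₂ : (algCore Ω₂).Nonempty) :
    algCore (Ω₁ - Ω₂) = algCore Ω₁ - algCore Ω₂ := by
  obtain ⟨c₁, hC₁⟩ := hc₁
  obtain ⟨c₂, hC₂⟩ := hc₂
  ext x
  constructor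
  · rintro ⟨hx, hcore⟩
    obtain ⟨δ, hδ, hδ'⟩ := hcore (x - (c₁ - c₂))
    set t : ℝ := min δ 1 / 2 with ht
    have ht0 : 0 < t := by positivity
    have htδ : t < δ := by
      have : min δ 1 ≤ δ := min_le_left _ _
      simp only [ht]; linarith
    have hy : x + t • (x - (c₁ - c₂)) ∈ Ω₁ - Ω₂ := hδ' t (by rw [abs_of_pos ht0]; exact htδ)
    obtain ⟨a, ha, b, hb, hab⟩ := Set.mem_sub.1 hy
    set l : ℝ := t / (1 + t) with hl
    have hl0 : 0 < l := by positivity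
    have hl1 : l ≤ 1 := by
      rw [hl, div_le_one (by linarith)]; linarith
    refine Set.mem_sub.2 ⟨(1 - l) • a + l • c₁, core_seg h₁ hC₁ ha hl0 hl1,
      (1 - l) • b + l • c₂, core_seg h₂ hC₂ hb hl0 hl1, ?_⟩
    have key : (1 - l) • (a - b) + l • (c₁ - c₂) = x := by
      have h1t : (1 : ℝ) + t ≠ 0 := by linarith
      rw [hab, hl]
      match_scalars <;> field_simp <;> ring
    rw [← key]
    module
  · rintro ⟨a, ⟨ha, hacore⟩, b, ⟨hb, _⟩, rfl⟩
    refine ⟨Set.mem_sub.2 ⟨a, ha, b, hb, rfl⟩, fun v => ?_⟩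
    obtain ⟨δ, hδ, hδ'⟩ := hacore v
    refine ⟨δ, hδ, fun t ht => ?_⟩
    have := hδ' t ht
    exact Set.mem_sub.2 ⟨a + t • v, this, b, hb, by rw [add_sub_right_comm]⟩
end

section
/- Let X be a real vector space and Ω₁, Ω₂ ⊆ X convex sets with core(Ω₁) ≠ ∅ and core(Ω₂) ≠ ∅. Then Ω₁ and Ω₂ are properly separated if and only if core(Ω₁) ∩ core(Ω₂) = ∅. -/
/-- Two sets are properly separated if some nonzero linear functional separates them,
with strict inequality at some pair of points. -/
def ProperlySeparated {X : Type*} [AddCommGroup X] [Module ℝ X] (Ω₁ Ω₂ : Set X) : Prop :=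
  ∃ f : X →ₗ[ℝ] ℝ, f ≠ 0 ∧ (∀ x₁ ∈ Ω₁, ∀ x₂ ∈ Ω₂, f x₁ ≤ f x₂) ∧
    ∃ xb₁ ∈ Ω₁, ∃ xb₂ ∈ Ω₂, f xb₁ < f xb₂

section Aux

variable {X : Type*} [AddCommGroup X] [Module ℝ X]

lemma algCore_subset (Ω : Set X) : algCore Ω ⊆ Ω := fun _ hx => hx.1

/-- Segment lemma: moving from a core point towards a point of a convex set
stays in the core (except possibly at the endpoint). -/
lemma algCore_segment {Ω : Set X} (hΩ : Convex ℝ Ω) {a x : X} (ha : a ∈ algCore Ω)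
    (hx : x ∈ Ω) {t : ℝ} (ht0 : 0 ≤ t) (ht1 : t < 1) :
    (1 - t) • a + t • x ∈ algCore Ω := by
  have h1t : 0 < 1 - t := by linarith
  constructor
  · exact hΩ ha.1 hx (le_of_lt h1t) ht0 (by ring)
  · intro v
    obtain ⟨δ, hδ, hδv⟩ := ha.2 v
    refine ⟨(1 - t) * δ, by positivity, fun s hs => ?_⟩
    have hmem : a + (s / (1 - t)) • v ∈ Ω := by
      apply hδv
      rw [abs_div, abs_of_pos h1t, div_lt_iff₀ h1t]
      calc |s| < (1 - t) * δ := hs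
        _ = δ * (1 - t) := by ring
    have key : (1 - t) • (a + (s / (1 - t)) • v) + t • x
        = (1 - t) • a + t • x + s • v := by
      rw [smul_add, smul_smul]
      have : (1 - t) * (s / (1 - t)) = s := by field_simp
      rw [this]; abel
    rw [← key]
    exact hΩ hmem hx (le_of_lt h1t) ht0 (by ring)

/-- The algebraic core of a convex set is "algebraically open". -/
lemma algCore_open {Ω : Set X} (hΩ : Convex ℝ Ω) {a : X} (ha : a ∈ algCore Ω) (v : X) :
    ∃ δ > (0 : ℝ), ∀ t : ℝ, |t| < δ → a + t • v ∈ algCore Ω := by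
  obtain ⟨δ, hδ, hδv⟩ := ha.2 v
  refine ⟨δ / 2, by positivity, fun t ht => ?_⟩
  have hxΩ : a + (2 * t) • v ∈ Ω := by
    apply hδv
    rw [abs_mul, abs_two]
    calc 2 * |t| < 2 * (δ / 2) := by
          apply mul_lt_mul_of_pos_left ht; norm_num
      _ = δ := by ring
  have := algCore_segment hΩ ha hxΩ (t := 1 / 2) (by norm_num) (by norm_num)
  have key : (1 - 1 / 2 : ℝ) • a + (1 / 2 : ℝ) • (a + (2 * t) • v) = a + t • v := by
    rw [smul_add, smul_smul]
    rw [show (1 / 2 : ℝ) * (2 * t) = t by ring]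
    rw [show (1 - 1 / 2 : ℝ) = 1 / 2 by norm_num, ← add_assoc, ← add_smul]
    norm_num
  rwa [key] at this

lemma algCore_convex {Ω : Set X} (hΩ : Convex ℝ Ω) : Convex ℝ (algCore Ω) := by
  intro a ha b hb s t hs ht hst
  rcases lt_or_eq_of_le (show t ≤ 1 by linarith) with h1 | h1
  · have hseg := algCore_segment hΩ ha hb.1 ht h1
    rwa [show (1 - t) = s by linarith] at hseg
  · have hs0 : s = 0 := by linarith
    rw [hs0, h1, zero_smul, zero_add, one_smul]
    exact hb

end Aux

theorem properly_separated_iff_core_disjoint {X : Type*} [AddCommGroup X] [Module ℝ X]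
    (Ω₁ Ω₂ : Set X) (h₁ : Convex ℝ Ω₁) (h₂ : Convex ℝ Ω₂)
    (hc₁ : (algCore Ω₁).Nonempty) (hc₂ : (algCore Ω₂).Nonempty) :
    ProperlySeparated Ω₁ Ω₂ ↔ algCore Ω₁ ∩ algCore Ω₂ = ∅ := by
  constructor
  · -- forward direction
    rintro ⟨f, hf0, hsep, -⟩
    rw [Set.eq_empty_iff_forall_notMem]
    rintro x ⟨hx1, hx2⟩
    obtain ⟨v, hv⟩ : ∃ v, f v ≠ 0 := by
      by_contra h
      push_neg at h
      exact hf0 (LinearMap.ext fun y => by simp [h y])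
    obtain ⟨δ, hδ, hδv⟩ := hx1.2 v
    have key : ∀ t : ℝ, |t| < δ → t * f v ≤ 0 := by
      intro t ht
      have h1 : f (x + t • v) ≤ f x := hsep _ (hδv t ht) x hx2.1
      rw [map_add, map_smul, smul_eq_mul] at h1
      linarith
    have h1 := key (δ / 2) (by rw [abs_of_pos (by positivity)]; linarith)
    have h2 := key (-(δ / 2)) (by rw [abs_neg, abs_of_pos (by positivity)]; linarith)
    have : f v = 0 := by nlinarith
    exact hv this
  · -- backward direction
    intro hdisj
    have hdisj' : ∀ x, ¬(x ∈ algCore Ω₁ ∧ x ∈ algCore Ω₂) := by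
      intro x hx
      have : x ∈ algCore Ω₁ ∩ algCore Ω₂ := hx
      rw [hdisj] at this
      exact this
    obtain ⟨a₀, ha₀⟩ := hc₁
    obtain ⟨b₀, hb₀⟩ := hc₂
    set k₀ : X := a₀ - b₀ with hk₀def
    have hk₀ : k₀ ≠ 0 := by
      intro h
      rw [hk₀def, sub_eq_zero] at h
      exact hdisj' a₀ ⟨ha₀, h ▸ hb₀⟩
    -- The set C = (core Ω₁ - core Ω₂) - k₀
    set C : Set X := {z | ∃ a ∈ algCore Ω₁, ∃ b ∈ algCore Ω₂, z = a - b - k₀} with hCdef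
    have h0C : (0 : X) ∈ C := ⟨a₀, ha₀, b₀, hb₀, by rw [hk₀def]; abel⟩
    have hCconv : Convex ℝ C := by
      rintro z₁ ⟨a₁, ha₁, b₁, hb₁, rfl⟩ z₂ ⟨a₂, ha₂, b₂, hb₂, rfl⟩ s t hs ht hst
      refine ⟨s • a₁ + t • a₂, algCore_convex h₁ ha₁ ha₂ hs ht hst,
        s • b₁ + t • b₂, algCore_convex h₂ hb₁ hb₂ hs ht hst, ?_⟩
      have : s • (a₁ - b₁ - k₀) + t • (a₂ - b₂ - k₀)
          = (s • a₁ + t • a₂) - (s • b₁ + t • b₂) - (s + t) • k₀ := by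
        simp only [smul_sub, add_smul]; abel
      rw [this, hst, one_smul]
    have hCabs : Absorbent ℝ C := by
      intro x
      obtain ⟨δ, hδ, hδv⟩ := algCore_open h₁ ha₀ x
      rw [absorbs_iff_norm]
      refine ⟨2 / δ, fun c hc => ?_⟩
      have hc0 : c ≠ 0 := by
        intro h
        rw [h, norm_zero] at hc
        have : (0 : ℝ) < 2 / δ := by positivity
        linarith
      intro y hy
      rw [Set.mem_singleton_iff] at hy
      subst hy
      rw [Set.mem_smul_set_iff_inv_smul_mem₀ hc0]
      have hcinv : |c⁻¹| < δ := by
        rw [abs_inv]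
        have h2δ : 2 / δ ≤ |c| := by rwa [Real.norm_eq_abs] at hc
        have hcpos : 0 < |c| := abs_pos.mpr hc0
        rw [inv_lt_comm₀ hcpos hδ]
        have h12 : (1 : ℝ) / δ < 2 / δ := by gcongr; norm_num
        calc δ⁻¹ = 1 / δ := (one_div δ).symm
          _ < 2 / δ := h12
          _ ≤ |c| := h2δ
      exact ⟨a₀ + c⁻¹ • y, hδv c⁻¹ hcinv, b₀, hb₀, by rw [hk₀def]; abel⟩
    have hnk₀C : -k₀ ∉ C := by
      rintro ⟨a, ha, b, hb, hab⟩
      have hh : a - b = 0 := by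
        have h' : a - b - k₀ + k₀ = -k₀ + k₀ := by rw [hab]
        have h'' : a - b - k₀ + k₀ = a - b := by abel
        have h''' : -k₀ + k₀ = (0 : X) := by abel
        rw [h'', h'''] at h'
        exact h'
      rw [sub_eq_zero] at hh
      exact hdisj' a ⟨ha, hh ▸ hb⟩
    -- gauge of C
    have hgauge_add := gauge_add_le hCconv hCabs
    have hgauge1 : 1 ≤ gauge C (-k₀) :=
      one_le_gauge_of_notMem (hCconv.starConvex h0C) (hCabs _) hnk₀C
    have hk₀ne : -k₀ ≠ 0 := neg_ne_zero.mpr hk₀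
    set f : X →ₗ.[ℝ] ℝ := LinearPMap.mkSpanSingleton (-k₀) (gauge C (-k₀)) hk₀ne with hfdef
    have hfle : ∀ x : f.domain, f x ≤ gauge C x := by
      rintro ⟨x, hx⟩
      obtain ⟨c, rfl⟩ := Submodule.mem_span_singleton.mp hx
      have happ : f ⟨c • (-k₀), hx⟩ = c • gauge C (-k₀) :=
        LinearPMap.mkSpanSingleton'_apply _ _ _ c hx
      rw [happ]
      rcases le_or_gt 0 c with hc0 | hc0
      · exact le_of_eq (gauge_smul_of_nonneg hc0 _).symm
      · have h1 : c • gauge C (-k₀) ≤ 0 := by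
          rw [smul_eq_mul]
          apply mul_nonpos_of_nonpos_of_nonneg (le_of_lt hc0)
          linarith
        exact h1.trans (gauge_nonneg _)
    obtain ⟨g, hg_eq, hg_le⟩ := exists_extension_of_le_sublinear f (gauge C)
      (fun c hc x => by rw [gauge_smul_of_nonneg hc.le, smul_eq_mul]) hgauge_add hfle
    have hgk₀ : 1 ≤ g (-k₀) := by
      have := hg_eq ⟨-k₀, Submodule.mem_span_singleton_self _⟩
      rw [LinearPMap.mkSpanSingleton_apply ℝ ℝ hk₀ne] at this
      rw [this]; exact hgauge1
    have hgk₀' : g k₀ ≤ -1 := by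
      rw [map_neg] at hgk₀; linarith
    -- weak separation on cores
    have hcore_le : ∀ a ∈ algCore Ω₁, ∀ b ∈ algCore Ω₂, g a ≤ g b := by
      intro a ha b hb
      have hmem : a - b - k₀ ∈ C := ⟨a, ha, b, hb, rfl⟩
      have h1 : g (a - b - k₀) ≤ 1 := (hg_le _).trans (gauge_le_one_of_mem hmem)
      rw [map_sub, map_sub] at h1
      linarith
    -- strict separation on cores
    have hcore_lt : ∀ a ∈ algCore Ω₁, ∀ b ∈ algCore Ω₂, g a < g b := by
      intro a ha b hb
      rcases lt_or_eq_of_le (hcore_le a ha b hb) with h | h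
      · exact h
      · exfalso
        obtain ⟨δ, hδ, hδv⟩ := algCore_open h₁ ha (-k₀)
        have hmem : a + (δ / 2) • (-k₀) ∈ algCore Ω₁ :=
          hδv (δ / 2) (by rw [abs_of_pos (by positivity)]; linarith)
        have := hcore_le _ hmem b hb
        rw [map_add, map_smul, smul_eq_mul] at this
        nlinarith
    -- g is nonzero
    have hg0 : g ≠ 0 := by
      intro h
      rw [h] at hgk₀
      simp at hgk₀
      linarith
    -- weak separation on the full sets
    have hfull : ∀ x₁ ∈ Ω₁, ∀ x₂ ∈ Ω₂, g x₁ ≤ g x₂ := by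
      intro x₁ hx₁ x₂ hx₂
      by_contra hcon
      push_neg at hcon
      set ε : ℝ := g x₁ - g x₂ with hεdef
      have hε : 0 < ε := by rw [hεdef]; linarith
      set M : ℝ := g b₀ - g a₀ with hMdef
      have hM : 0 < M := by
        have := hcore_lt a₀ ha₀ b₀ hb₀
        rw [hMdef]; linarith
      set t : ℝ := M / (M + ε) with htdef
      have hMε : 0 < M + ε := by linarith
      have ht0 : 0 ≤ t := by positivity
      have ht1 : t < 1 := by
        rw [htdef, div_lt_one hMε]; linarith
      have hp : (1 - t) • a₀ + t • x₁ ∈ algCore Ω₁ := algCore_segment h₁ ha₀ hx₁ ht0 ht1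
      have hq : (1 - t) • b₀ + t • x₂ ∈ algCore Ω₂ := algCore_segment h₂ hb₀ hx₂ ht0 ht1
      have hlt := hcore_lt _ hp _ hq
      rw [map_add, map_add, map_smul, map_smul, map_smul, map_smul,
        smul_eq_mul, smul_eq_mul, smul_eq_mul, smul_eq_mul] at hlt
      have hkey : t * ε = (1 - t) * M := by
        rw [htdef]; field_simp; ring
      nlinarith [hlt, hkey]
    refine ⟨g, hg0, hfull, a₀, ha₀.1, b₀, hb₀.1, hcore_lt a₀ ha₀ b₀ hb₀⟩
end

section
/- (Normal cone intersection rule.) Let X be a real vector space and Ω₁, …, Ω_m (m ≥ 2) convex subsets of X satisfying the qualification condition ⋂_{i=1}^m core(Ω_i) ≠ ∅. Then for every x̄ ∈ ⋂_{i=1}^m Ω_i, N(x̄; ⋂_{i=1}^m Ω_i) = Σ_{i=1}^m N(x̄; Ω_i), where the right-hand side is the set of all sums f₁ + … + f_m with f_i ∈ N(x̄; Ω_i). -/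
/-- The normal cone to a set `Ω` at `xb`, empty (by convention) if `xb ∉ Ω`. -/
def normalCone {X : Type*} [AddCommGroup X] [Module ℝ X] (Ω : Set X) (xb : X) :
    Set (X →ₗ[ℝ] ℝ) :=
  {f | xb ∈ Ω ∧ ∀ x ∈ Ω, f (x - xb) ≤ 0}

lemma sep {X : Type*} [AddCommGroup X] [Module ℝ X] {A B : Set X}
    (hA : Convex ℝ A) (hB : Convex ℝ B) (h0A : (0:X) ∈ A) (h0B : (0:X) ∈ B)
    {w : X} (hwA : w ∈ algCore A) (hwB : w ∈ B) (f : X →ₗ[ℝ] ℝ)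
    (hf : ∀ x, x ∈ A → x ∈ B → f x ≤ 0) :
    ∃ g : X →ₗ[ℝ] ℝ, (∀ x ∈ A, g x ≤ 0) ∧ (∀ x ∈ B, f x ≤ g x) := by
  classical
  set S : X → Set ℝ := fun x =>
    {r | ∃ t : ℝ, 0 < t ∧ ∃ u, u ∈ A ∧ ∃ v, v ∈ B ∧ t • (u - v) = x ∧ r = t * (-(f v))}
    with hS
  have hne : ∀ x, (S x).Nonempty := by
    intro x
    obtain ⟨δ, hδ, hδx⟩ := hwA.2 x
    have ht : (0:ℝ) < δ/2 := by linarith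
    have hu : w + (δ/2) • x ∈ A := hδx (δ/2) (by rw [abs_of_pos ht]; linarith)
    refine ⟨(δ/2)⁻¹ * (-(f w)), (δ/2)⁻¹, by positivity, w + (δ/2) • x, hu, w, hwB, ?_, rfl⟩
    rw [add_sub_cancel_left, smul_smul, inv_mul_cancel₀ (ne_of_gt ht), one_smul]
  have hcomb : ∀ {t s : ℝ} {u u' v v' : X}, 0 < t → 0 < s → u ∈ A → u' ∈ A → v ∈ B → v' ∈ B →
      ∃ ub, ub ∈ A ∧ ∃ vb, vb ∈ B ∧
        (t+s) • (ub - vb) = t • (u-v) + s • (u'-v') ∧ (t+s) * f vb = t * f v + s * f v' := by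
    intro t s u u' v v' ht hs hu hu' hv hv'
    have hts : (0:ℝ) < t + s := by linarith
    have hts' : t + s ≠ 0 := ne_of_gt hts
    have hsum : t/(t+s) + s/(t+s) = 1 := by field_simp
    refine ⟨(t/(t+s)) • u + (s/(t+s)) • u',
      hA hu hu' (by positivity) (by positivity) hsum,
      (t/(t+s)) • v + (s/(t+s)) • v',
      hB hv hv' (by positivity) (by positivity) hsum, ?_, ?_⟩
    · match_scalars <;> (field_simp; try ring)
    · simp only [map_add, map_smul, smul_eq_mul]
      field_simp
      try ring
  have hbdd : ∀ x, BddBelow (S x) := by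
    intro x
    obtain ⟨r₀, s, hs, u', hu', v', hv', hx', hr₀⟩ := hne (-x)
    refine ⟨s * f v', fun r hr => ?_⟩
    obtain ⟨t, ht, u, hu, v, hv, hx, rfl⟩ := hr
    obtain ⟨ub, hub, vb, hvb, heq, hfeq⟩ := hcomb ht hs hu hu' hv hv'
    rw [hx, hx', add_neg_cancel] at heq
    have hub' : ub = vb := by
      have := smul_eq_zero.mp heq
      rcases this with h | h
      · exact absurd h (by positivity)
      · exact sub_eq_zero.mp h
    have hfv : f vb ≤ 0 := hf vb (hub' ▸ hub) hvb
    nlinarith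
  set p : X → ℝ := fun x => sInf (S x) with hp
  have hp0 : 0 ≤ p 0 := by
    apply le_csInf (hne 0)
    rintro r ⟨t, ht, u, hu, v, hv, h0, rfl⟩
    have huv : u = v := by
      rcases smul_eq_zero.mp h0 with h | h
      · exact absurd h (by positivity)
      · exact sub_eq_zero.mp h
    have := hf v (huv ▸ hu) hv
    nlinarith
  have hscale : ∀ (c : ℝ), 0 < c → ∀ x r, r ∈ S x → c * r ∈ S (c • x) := by
    rintro c hc x r ⟨t, ht, u, hu, v, hv, hx, rfl⟩
    exact ⟨c*t, mul_pos hc ht, u, hu, v, hv, by rw [← hx, mul_smul], by ring⟩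
  have hle : ∀ (c : ℝ), 0 < c → ∀ x, p (c • x) ≤ c * p x := by
    intro c hc x
    have h : c⁻¹ * p (c • x) ≤ p x := by
      apply le_csInf (hne x)
      intro r hr
      have h2 : p (c • x) ≤ c * r := csInf_le (hbdd _) (hscale c hc x r hr)
      calc c⁻¹ * p (c • x) ≤ c⁻¹ * (c * r) :=
            mul_le_mul_of_nonneg_left h2 (by positivity)
        _ = r := by field_simp
    calc p (c • x) = c * (c⁻¹ * p (c • x)) := by field_simp
      _ ≤ c * p x := mul_le_mul_of_nonneg_left h (le_of_lt hc)
  have N_hom : ∀ c : ℝ, 0 < c → ∀ x, p (c • x) = c * p x := by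
    intro c hc x
    refine le_antisymm (hle c hc x) ?_
    have := hle c⁻¹ (by positivity) (c • x)
    rw [smul_smul, inv_mul_cancel₀ (ne_of_gt hc), one_smul] at this
    calc c * p x ≤ c * (c⁻¹ * p (c • x)) := mul_le_mul_of_nonneg_left this (le_of_lt hc)
      _ = p (c • x) := by field_simp
  have N_add : ∀ x y, p (x + y) ≤ p x + p y := by
    intro x y
    have step1 : ∀ r ∈ S x, ∀ r' ∈ S y, p (x + y) ≤ r + r' := by
      rintro r ⟨t, ht, u, hu, v, hv, hx, rfl⟩ r' ⟨s, hs, u', hu', v', hv', hy, rfl⟩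
      obtain ⟨ub, hub, vb, hvb, heq, hfeq⟩ := hcomb ht hs hu hu' hv hv'
      refine csInf_le (hbdd _) ⟨t+s, by linarith, ub, hub, vb, hvb, ?_, by linarith⟩
      rw [heq, hx, hy]
    have step2 : ∀ r ∈ S x, p (x + y) - r ≤ p y := by
      intro r hr
      apply le_csInf (hne y)
      intro r' hr'
      have := step1 r hr r' hr'
      linarith
    have step3 : p (x + y) - p y ≤ p x := by
      apply le_csInf (hne x)
      intro r hr
      have := step2 r hr
      linarith
    linarith
  obtain ⟨g, -, hg⟩ := exists_extension_of_le_sublinear ⟨⊥, 0⟩ p N_hom N_add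
    (by rintro ⟨x, hx⟩
        rw [Submodule.mem_bot] at hx
        simp only [LinearMap.zero_apply]
        subst hx
        exact le_trans hp0 (le_of_eq rfl))
  refine ⟨g, ?_, ?_⟩
  · intro x hx
    have h1 : p x ≤ 0 := csInf_le (hbdd x) ⟨1, one_pos, x, hx, 0, h0B, by simp, by simp⟩
    exact le_trans (hg x) h1
  · intro v hv
    have h1 : p (-v) ≤ 1 * (-(f v)) := csInf_le (hbdd _) ⟨1, one_pos, 0, h0A, v, hv, by simp, rfl⟩
    have h2 := hg (-v)
    rw [map_neg] at h2
    linarith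
lemma sep2 {X : Type*} [AddCommGroup X] [Module ℝ X] {Ω₁ Ω₂ : Set X}
    (h1 : Convex ℝ Ω₁) (h2 : Convex ℝ Ω₂) {xb : X} (hx1 : xb ∈ Ω₁) (hx2 : xb ∈ Ω₂)
    {w : X} (hw1 : w ∈ algCore Ω₁) (hw2 : w ∈ Ω₂) (f : X →ₗ[ℝ] ℝ)
    (hf : ∀ x, x ∈ Ω₁ → x ∈ Ω₂ → f (x - xb) ≤ 0) :
    ∃ g : X →ₗ[ℝ] ℝ, (∀ x ∈ Ω₁, g (x - xb) ≤ 0) ∧ (∀ x ∈ Ω₂, f (x - xb) ≤ g (x - xb)) := by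
  set A : Set X := (· + xb) ⁻¹' Ω₁ with hAdef
  set B : Set X := (· + xb) ⁻¹' Ω₂ with hBdef
  have hconvA : Convex ℝ A := by
    intro a ha b hb α β hα hβ hαβ
    have hβ1 : β = 1 - α := by linarith
    subst hβ1
    have : (α • a + (1-α) • b) + xb = α • (a + xb) + (1-α) • (b + xb) := by module
    show (α • a + (1-α) • b) + xb ∈ Ω₁
    rw [this]
    exact h1 ha hb hα hβ hαβ
  have hconvB : Convex ℝ B := by
    intro a ha b hb α β hα hβ hαβ
    have hβ1 : β = 1 - α := by linarith
    subst hβ1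
    have : (α • a + (1-α) • b) + xb = α • (a + xb) + (1-α) • (b + xb) := by module
    show (α • a + (1-α) • b) + xb ∈ Ω₂
    rw [this]
    exact h2 ha hb hα hβ hαβ
  have h0A : (0:X) ∈ A := by show (0:X) + xb ∈ Ω₁; rwa [zero_add]
  have h0B : (0:X) ∈ B := by show (0:X) + xb ∈ Ω₂; rwa [zero_add]
  have hwA : w - xb ∈ algCore A := by
    refine ⟨by show w - xb + xb ∈ Ω₁; rw [sub_add_cancel]; exact hw1.1, fun v => ?_⟩
    obtain ⟨δ, hδ, hδv⟩ := hw1.2 v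
    exact ⟨δ, hδ, fun t ht => by
      show w - xb + t • v + xb ∈ Ω₁
      have : w - xb + t • v + xb = w + t • v := by abel
      rw [this]; exact hδv t ht⟩
  have hwB : w - xb ∈ B := by show w - xb + xb ∈ Ω₂; rwa [sub_add_cancel]
  have hfAB : ∀ x, x ∈ A → x ∈ B → f x ≤ 0 := by
    intro x hxA hxB
    have := hf (x + xb) hxA hxB
    rwa [add_sub_cancel_right] at this
  obtain ⟨g, hg1, hg2⟩ := sep hconvA hconvB h0A h0B hwA hwB f hfAB
  refine ⟨g, fun x hx => ?_, fun x hx => ?_⟩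
  · exact hg1 (x - xb) (by show x - xb + xb ∈ Ω₁; rwa [sub_add_cancel])
  · exact hg2 (x - xb) (by show x - xb + xb ∈ Ω₂; rwa [sub_add_cancel])

lemma main_aux {X : Type*} [AddCommGroup X] [Module ℝ X] :
    ∀ n : ℕ, 1 ≤ n → ∀ Ω : Fin n → Set X, (∀ i, Convex ℝ (Ω i)) →
    ∀ w : X, (∀ i, w ∈ algCore (Ω i)) →
    ∀ xb : X, (∀ i, xb ∈ Ω i) →
    ∀ f : X →ₗ[ℝ] ℝ, (∀ x, (∀ i, x ∈ Ω i) → f (x - xb) ≤ 0) →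
    ∃ g : Fin n → (X →ₗ[ℝ] ℝ), (∀ i, ∀ x ∈ Ω i, g i (x - xb) ≤ 0) ∧ f = ∑ i, g i := by
  intro n hn
  induction n, hn using Nat.le_induction with
  | base =>
    intro Ω hconv w hw xb hxb f hf
    refine ⟨fun _ => f, fun i x hx => hf x (fun j => by
      have : j = i := Subsingleton.elim j i
      rwa [this]), by simp⟩
  | succ n hn ih =>
    intro Ω hconv w hw xb hxb f hf
    set B : Set X := ⋂ i : Fin n, Ω i.succ with hBdef
    have hBconv : Convex ℝ B := convex_iInter (fun i => hconv i.succ)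
    have hxB : xb ∈ B := Set.mem_iInter.mpr (fun i => hxb i.succ)
    have hwB : w ∈ B := Set.mem_iInter.mpr (fun i => (hw i.succ).1)
    have hfAB : ∀ x, x ∈ Ω 0 → x ∈ B → f (x - xb) ≤ 0 := by
      intro x hx0 hxB'
      refine hf x (fun j => ?_)
      rcases Fin.eq_zero_or_eq_succ j with h | ⟨k, hk⟩
      · rwa [h]
      · rw [hk]; exact Set.mem_iInter.mp hxB' k
    obtain ⟨g0, hg0, hg0'⟩ := sep2 (hconv 0) hBconv (hxb 0) hxB (hw 0) hwB f hfAB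
    obtain ⟨g', hg', hsum⟩ := ih (fun i => Ω i.succ) (fun i => hconv i.succ) w
      (fun i => hw i.succ) xb (fun i => hxb i.succ) (f - g0)
      (fun x hx => by
        have := hg0' x (Set.mem_iInter.mpr hx)
        simp only [LinearMap.sub_apply]
        linarith)
    refine ⟨Fin.cases g0 g', fun i => ?_, ?_⟩
    · induction i using Fin.cases with
      | zero => simpa using hg0
      | succ k => simpa using hg' k
    · rw [Fin.sum_univ_succ]
      simp only [Fin.cases_zero, Fin.cases_succ]
      rw [← hsum]
      abel

theorem normal_cone_intersection {X : Type*} [AddCommGroup X] [Module ℝ X]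
    (m : ℕ) (hm : 2 ≤ m) (Ω : Fin m → Set X) (hconv : ∀ i, Convex ℝ (Ω i))
    (hqc : (⋂ i, algCore (Ω i)).Nonempty) :
    ∀ xb ∈ ⋂ i, Ω i,
      normalCone (⋂ i, Ω i) xb
        = {f | ∃ g : Fin m → (X →ₗ[ℝ] ℝ), (∀ i, g i ∈ normalCone (Ω i) xb) ∧
            f = ∑ i, g i} := by
  intro xb hxb
  obtain ⟨w, hw⟩ := hqc
  have hw' : ∀ i, w ∈ algCore (Ω i) := fun i => Set.mem_iInter.mp hw i
  have hxb' : ∀ i, xb ∈ Ω i := fun i => Set.mem_iInter.mp hxb i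
  ext f
  constructor
  · rintro ⟨-, hf⟩
    obtain ⟨g, hg, hsum⟩ := main_aux m (by omega) Ω hconv w hw' xb hxb' f
      (fun x hx => hf x (Set.mem_iInter.mpr hx))
    exact ⟨g, fun i => ⟨hxb' i, hg i⟩, hsum⟩
  · rintro ⟨g, hg, rfl⟩
    refine ⟨hxb, fun x hx => ?_⟩
    rw [LinearMap.sum_apply]
    apply Finset.sum_nonpos
    intro i _
    exact (hg i).2 x (Set.mem_iInter.mp hx i)
end

section
/- (Coderivative sum rule.) Let X and Y be real vector spaces and F₁, F₂ : X ⇉ Y set-valued mappings with convex graphs such that there exists (x, y₁, y₂) ∈ X × Y × Y with (x, y₁) ∈ core(gph(F₁)) and (x, y₂) ∈ core(gph(F₂)). Then for every (x̄, ȳ) ∈ gph(F₁ + F₂), every linear g : Y → ℝ, and every pair (ȳ₁, ȳ₂) with ȳ = ȳ₁ + ȳ₂, ȳ₁ ∈ F₁(x̄), ȳ₂ ∈ F₂(x̄), one has D*(F₁+F₂)(x̄,ȳ)(g) = D*F₁(x̄,ȳ₁)(g) + D*F₂(x̄,ȳ₂)(g), where the right-hand side is the set of sums f₁ + f₂ with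 f_i ∈ D*F_i(x̄,ȳ_i)(g). -/
/-- The algebraic core of a set `Ω` in a real vector space. -/
lemma key_sep {X : Type*} [AddCommGroup X] [Module ℝ X] (D : Set (X × ℝ))
    (hconv : Convex ℝ D)
    (hpos : ∀ z ∈ D, z.1 = 0 → 0 ≤ z.2)
    (hdense : ∀ u : X, ∃ t : ℝ, 0 < t ∧ ∃ r : ℝ, (t • u, r) ∈ D) :
    ∃ φ : X →ₗ[ℝ] ℝ, ∀ z ∈ D, 0 ≤ φ z.1 + z.2 := by
  set s : ConvexCone ℝ (X × ℝ) :=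
    { carrier := {z | ∃ t : ℝ, 0 < t ∧ ∃ d ∈ D, z = t • d}
      smul_mem' := by
        rintro c hc z ⟨t, ht, d, hd, rfl⟩
        exact ⟨c * t, by positivity, d, hd, (mul_smul c t d).symm⟩
      add_mem' := by
        rintro z ⟨t, ht, d, hd, rfl⟩ w ⟨t', ht', d', hd', rfl⟩
        refine ⟨t + t', by positivity, (t / (t + t')) • d + (t' / (t + t')) • d', 
          hconv hd hd' (by positivity) (by positivity) (by field_simp), ?_⟩
        have htt : t + t' ≠ 0 := by positivity
        rw [smul_add, smul_smul, smul_smul]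
        rw [mul_div_cancel₀ _ htt, mul_div_cancel₀ _ htt] }
  have hmem : ∀ d ∈ D, d ∈ s := fun d hd => ⟨1, one_pos, d, hd, (one_smul ℝ d).symm⟩
  set p : Submodule ℝ (X × ℝ) := Submodule.prod ⊥ ⊤ with hp
  set f : (X × ℝ) →ₗ.[ℝ] ℝ := (LinearMap.snd ℝ X ℝ).toPMap p with hfdef
  have nonneg : ∀ x : f.domain, (x : X × ℝ) ∈ s → 0 ≤ f x := by
    rintro ⟨⟨x1, x2⟩, hx⟩ ⟨t, ht, d, hd, heq⟩
    change (x1, x2) ∈ Submodule.prod (⊥ : Submodule ℝ X) (⊤ : Submodule ℝ ℝ) at hx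
    simp only [Submodule.mem_prod, Submodule.mem_bot] at hx
    have hx1 : x1 = 0 := hx.1
    have hd1 : d.1 = 0 := by
      have : x1 = t • d.1 := congrArg Prod.fst heq
      rw [hx1] at this
      exact (smul_eq_zero.mp this.symm).resolve_left (ne_of_gt ht) 
    have h2 : x2 = t * d.2 := congrArg Prod.snd heq
    have := hpos d hd hd1
    show (0:ℝ) ≤ x2
    rw [h2]; positivity
  have dense : ∀ y, ∃ x : f.domain, (x : X × ℝ) + y ∈ s := by
    rintro ⟨u, r⟩
    obtain ⟨t, ht, rr, hrr⟩ := hdense u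
    refine ⟨⟨(0, rr / t - r), ⟨Submodule.mem_bot ℝ |>.mpr rfl, trivial⟩⟩, t⁻¹, by positivity, (t • u, rr), hrr, ?_⟩
    have h1 : (0:X) + u = t⁻¹ • (t • u) := by
      rw [smul_smul, inv_mul_cancel₀ (ne_of_gt ht), one_smul, zero_add]
    have h2 : rr / t - r + r = t⁻¹ • rr := by
      rw [smul_eq_mul, div_eq_mul_inv]
      ring
    exact Prod.ext h1 h2
  let s' : PointedCone ℝ (X × ℝ) :=
    { carrier := {z | z = 0 ∨ z ∈ s}
      add_mem' := by
        rintro a b (rfl | ha) (rfl | hb)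
        · left; simp
        · right; simpa using hb
        · right; simpa using ha
        · right; exact s.add_mem ha hb
      zero_mem' := Or.inl rfl
      smul_mem' := by
        rintro ⟨c, hc⟩ z (rfl | hz)
        · left; exact smul_zero _
        · change c • z = 0 ∨ c • z ∈ s
          rcases hc.eq_or_lt with h | h
          · left; rw [← h, zero_smul]
          · right; exact s.smul_mem h hz }
  have nonneg' : ∀ x : f.domain, (x : X × ℝ) ∈ s' → 0 ≤ f x := by
    rintro x (hx | hx)
    · have : x = 0 := Subtype.ext hx
      rw [this, LinearPMap.map_zero]
    · exact nonneg x hx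
  have dense' : ∀ y, ∃ x : f.domain, (x : X × ℝ) + y ∈ s' := fun y =>
    (dense y).imp fun _ h => Or.inr h
  obtain ⟨g, hg1, hg2⟩ := riesz_extension s' f nonneg' dense'
  refine ⟨g.comp (LinearMap.inl ℝ X ℝ), fun z hz => ?_⟩
  have h0 : g (0, z.2) = z.2 := hg1 ⟨(0, z.2), ⟨Submodule.mem_bot ℝ |>.mpr rfl, trivial⟩⟩
  have hz' : (0:ℝ) ≤ g z := hg2 z (Or.inr (hmem z hz))
  have hsplit : (z.1, z.2) = ((z.1, 0) : X × ℝ) + (0, z.2) := by simp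
  simp only [LinearMap.comp_apply, LinearMap.inl_apply]
  calc (0:ℝ) ≤ g z := hz'
    _ = g (z.1, 0) + g (0, z.2) := by rw [← map_add]; exact congrArg g hsplit
    _ = g (z.1, 0) + z.2 := by rw [h0]

/-- The coderivative of a set-valued mapping `F` at `(xb, yb) ∈ gph F`:
`f ∈ D*F(xb,yb)(g)` iff `(f, -g)` belongs to the normal cone of `gph F` at `(xb, yb)`. -/
def coderiv {X Y : Type*} [AddCommGroup X] [Module ℝ X] [AddCommGroup Y] [Module ℝ Y]
    (F : X → Set Y) (xb : X) (yb : Y) (g : Y →ₗ[ℝ] ℝ) : Set (X →ₗ[ℝ] ℝ) :=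
  {f | yb ∈ F xb ∧ ∀ x : X, ∀ y ∈ F x, f (x - xb) - g (y - yb) ≤ 0}

/-- The sum of two set-valued mappings. -/
def svSum {X Y : Type*} [AddCommGroup Y] (F₁ F₂ : X → Set Y) : X → Set Y :=
  fun x => {y | ∃ y₁ ∈ F₁ x, ∃ y₂ ∈ F₂ x, y = y₁ + y₂}

theorem coderivative_sum_rule {X Y : Type*} [AddCommGroup X] [Module ℝ X]
    [AddCommGroup Y] [Module ℝ Y] (F₁ F₂ : X → Set Y)
    (h₁ : Convex ℝ (gph F₁)) (h₂ : Convex ℝ (gph F₂))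
    (hqc : ∃ x : X, ∃ y₁ y₂ : Y,
      (x, y₁) ∈ algCore (gph F₁) ∧ (x, y₂) ∈ algCore (gph F₂)) :
    ∀ xb : X, ∀ yb : Y, yb ∈ svSum F₁ F₂ xb → ∀ g : Y →ₗ[ℝ] ℝ,
      ∀ yb₁ yb₂ : Y, yb₁ ∈ F₁ xb → yb₂ ∈ F₂ xb → yb = yb₁ + yb₂ →
        coderiv (svSum F₁ F₂) xb yb g
          = {f | ∃ f₁ ∈ coderiv F₁ xb yb₁ g, ∃ f₂ ∈ coderiv F₂ xb yb₂ g,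
              f = f₁ + f₂} := by
  intro xb yb hyb g yb₁ yb₂ h1b h2b hsum
  ext f
  simp only [Set.mem_setOf_eq]
  constructor
  · rintro ⟨-, hf⟩
    obtain ⟨xh, yh₁, yh₂, ⟨hm1, hc1⟩, ⟨hm2, -⟩⟩ := hqc
    set D : Set (X × ℝ) := {z | ∃ p ∈ gph F₁, ∃ q ∈ gph F₂,
        z = (p.1 - q.1, g (p.2 - yb₁) - f (q.1 - xb) + g (q.2 - yb₂))} with hD
    have hconv : Convex ℝ D := by
      rintro z ⟨⟨p1, p2⟩, hp, ⟨q1, q2⟩, hq, rfl⟩ w ⟨⟨p1', p2'⟩, hp', ⟨q1', q2'⟩, hq', rfl⟩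
        a b ha hb hab
      refine ⟨a • (p1, p2) + b • (p1', p2'), h₁ hp hp' ha hb hab,
        a • (q1, q2) + b • (q1', q2'), h₂ hq hq' ha hb hab, ?_⟩
      simp only [Prod.smul_mk, Prod.mk_add_mk, Prod.mk.injEq, map_sub, map_add, map_smul,
        smul_eq_mul, smul_sub, smul_add]
      constructor
      · module
      · linear_combination (f xb - g yb₁ - g yb₂) * hab
    have hpos : ∀ z ∈ D, z.1 = 0 → 0 ≤ z.2 := by
      rintro z ⟨⟨p1, p2⟩, hp, ⟨q1, q2⟩, hq, rfl⟩ hz1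
      simp only at hz1 ⊢
      have hpq : p1 = q1 := by
        have := sub_eq_zero.mp hz1; exact this
      subst hpq
      have hmem : p2 + q2 ∈ svSum F₁ F₂ p1 := ⟨p2, hp, q2, hq, rfl⟩
      have h := hf p1 (p2 + q2) hmem
      have he : p2 + q2 - yb = (p2 - yb₁) + (q2 - yb₂) := by rw [hsum]; abel
      rw [he, map_add] at h
      linarith
    have hdense : ∀ u : X, ∃ t : ℝ, 0 < t ∧ ∃ r : ℝ, (t • u, r) ∈ D := by
      intro u
      obtain ⟨δ, hδ, hδ'⟩ := hc1 (u, 0)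
      have hmemu : ((xh, yh₁) : X × Y) + (δ / 2) • (u, (0 : Y)) ∈ gph F₁ :=
        hδ' (δ / 2) (by rw [abs_of_pos (by linarith)]; linarith)
      have hmemu' : ((xh + (δ / 2) • u, yh₁) : X × Y) ∈ gph F₁ := by
        simpa [Prod.smul_mk, smul_zero] using hmemu
      refine ⟨δ / 2, by linarith,
        g (yh₁ - yb₁) - f (xh - xb) + g (yh₂ - yb₂),
        ⟨(xh + (δ / 2) • u, yh₁), hmemu', (xh, yh₂), hm2, ?_⟩⟩
      have h1 : (δ / 2) • u = xh + (δ / 2) • u - xh := by abel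
      exact Prod.ext h1 rfl
    obtain ⟨φ, hφ⟩ := key_sep D hconv hpos hdense
    refine ⟨-φ, ⟨h1b, ?_⟩, f + φ, ⟨h2b, ?_⟩, ?_⟩
    · intro x y hy
      have h := hφ _ ⟨(x, y), hy, (xb, yb₂), h2b, rfl⟩
      simp only [sub_self, map_zero, sub_zero, add_zero] at h
      simp only [LinearMap.neg_apply]
      linarith
    · intro x y hy
      have h := hφ _ ⟨(xb, yb₁), h1b, (x, y), hy, rfl⟩
      have he : xb - x = -(x - xb) := by abel
      simp only [he, map_neg, sub_self, map_zero, zero_sub, zero_add] at h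
      simp only [LinearMap.add_apply]
      linarith
    · ext u
      simp only [LinearMap.add_apply, LinearMap.neg_apply]
      ring
  · rintro ⟨f₁, ⟨-, hf₁⟩, f₂, ⟨-, hf₂⟩, rfl⟩
    refine ⟨hyb, ?_⟩
    rintro x y ⟨y₁, hy₁, y₂, hy₂, rfl⟩
    have a1 := hf₁ x y₁ hy₁
    have a2 := hf₂ x y₂ hy₂
    have he : y₁ + y₂ - yb = (y₁ - yb₁) + (y₂ - yb₂) := by rw [hsum]; abel
    rw [he, map_add]
    simp only [LinearMap.add_apply]
    linarith
end

section
/- (Subdifferential sum rule.) Let X be a real vector space and φ₁, φ₂ : X → ℝ ∪ {+∞} proper convex functions satisfying the epigraphical core qualification condition core(epi(φ₁)) ∩ core(epi(φ₂)) ≠ ∅. Then for every x̄ ∈ dom(φ₁) ∩ dom(φ₂), ∂(φ₁+φ₂)(x̄) = ∂φ₁(x̄) + ∂φ₂(x̄), where the right-hand side is the set of sums f₁ + f₂ with f_i ∈ ∂φ_i(x̄). -/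
/-- The epigraph of an extended-real-valued (`ℝ ∪ {+∞}`) function. -/
def epi {X : Type*} (φ : X → WithTop ℝ) : Set (X × ℝ) :=
  {p | φ p.1 ≤ (p.2 : WithTop ℝ)}

/-- The subdifferential of an extended-real-valued function `φ` at `xb`. -/
def subdiff {X : Type*} [AddCommGroup X] [Module ℝ X] (φ : X → WithTop ℝ) (xb : X) :
    Set (X →ₗ[ℝ] ℝ) :=
  {f | ∀ x : X, φ xb + ((f (x - xb) : ℝ) : WithTop ℝ) ≤ φ x}

-- helper iff lemmas
lemma add_coe_le_coe_iff (u : WithTop ℝ) (c d : ℝ) :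
    u + (c : WithTop ℝ) ≤ (d : WithTop ℝ) ↔ u ≤ ((d - c : ℝ) : WithTop ℝ) := by
  cases u with
  | top => simp [top_add]
  | coe r =>
      rw [← WithTop.coe_add, WithTop.coe_le_coe, WithTop.coe_le_coe]
      constructor <;> intro <;> linarith

lemma coe_le_add_coe_iff (u : WithTop ℝ) (c e : ℝ) :
    (e : WithTop ℝ) ≤ u + (c : WithTop ℝ) ↔ ((e - c : ℝ) : WithTop ℝ) ≤ u := by
  cases u with
  | top => simp [top_add]
  | coe r =>
      rw [← WithTop.coe_add, WithTop.coe_le_coe, WithTop.coe_le_coe]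
      constructor <;> intro <;> linarith

lemma epi_convex_ineq {X : Type*} [AddCommGroup X] [Module ℝ X]
    {ψ : X → WithTop ℝ} (hc : Convex ℝ (epi ψ)) :
    ∀ (lam mu : ℝ) (a b : X) (ra rb : ℝ), 0 ≤ lam → 0 ≤ mu → lam + mu = 1 →
      ψ a ≤ (ra : WithTop ℝ) → ψ b ≤ (rb : WithTop ℝ) →
      ψ (lam • a + mu • b) ≤ ((lam * ra + mu * rb : ℝ) : WithTop ℝ) := by
  intro lam mu a b ra rb hl hm hlm ha hb
  have h := hc (x := (a, ra)) ha (y := (b, rb)) hb hl hm hlm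
  simpa [epi, Prod.ext_iff, smul_eq_mul] using h

lemma ne_top_of_add_le {x y : WithTop ℝ} {c : ℝ} (h : x + y ≤ (c : WithTop ℝ)) :
    x ≠ ⊤ ∧ y ≠ ⊤ := by
  constructor
  · rintro rfl
    rw [top_add] at h
    exact WithTop.not_top_le_coe _ h
  · rintro rfl
    rw [add_top] at h
    exact WithTop.not_top_le_coe _ h

lemma sandwich {X : Type*} [AddCommGroup X] [Module ℝ X]
    (ψ θ : X → WithTop ℝ)
    (hψ : ∀ (lam mu : ℝ) (a b : X) (ra rb : ℝ), 0 ≤ lam → 0 ≤ mu → lam + mu = 1 →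
      ψ a ≤ (ra : WithTop ℝ) → ψ b ≤ (rb : WithTop ℝ) →
      ψ (lam • a + mu • b) ≤ ((lam * ra + mu * rb : ℝ) : WithTop ℝ))
    (hθ : ∀ (lam mu : ℝ) (a b : X) (ra rb : ℝ), 0 ≤ lam → 0 ≤ mu → lam + mu = 1 →
      θ a ≤ (ra : WithTop ℝ) → θ b ≤ (rb : WithTop ℝ) →
      θ (lam • a + mu • b) ≤ ((lam * ra + mu * rb : ℝ) : WithTop ℝ))
    (hψ0 : ψ 0 = 0) (hθ0 : θ 0 = 0)
    (hpos : ∀ x, (0 : WithTop ℝ) ≤ ψ x + θ x)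
    (z₀ : X) (hθz : θ z₀ ≠ ⊤)
    (hψz : ∀ v : X, ∃ s : ℝ, 0 < s ∧ ψ (z₀ + s • v) ≠ ⊤) :
    ∃ g : X →ₗ[ℝ] ℝ, (∀ x, ((g x : ℝ) : WithTop ℝ) ≤ ψ x) ∧
      (∀ x, ((-(g x) : ℝ) : WithTop ℝ) ≤ θ x) := by
  obtain ⟨rz, hrz⟩ := WithTop.ne_top_iff_exists.mp hθz
  -- the set of "approximate slopes"
  set S : X → Set ℝ := fun v =>
    {r : ℝ | ∃ t : ℝ, 0 < t ∧ ∃ a b : X, a - b = t • v ∧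
      ψ a + θ b ≤ ((t * r : ℝ) : WithTop ℝ)} with hS
  -- nonemptiness
  have hne : ∀ v : X, (S v).Nonempty := by
    intro v
    obtain ⟨s, hs, hfin⟩ := hψz v
    obtain ⟨ra, hra⟩ := WithTop.ne_top_iff_exists.mp hfin
    refine ⟨(ra + rz) / s, s, hs, z₀ + s • v, z₀, by abel, ?_⟩
    rw [← hra, ← hrz, ← WithTop.coe_add, WithTop.coe_le_coe,
      mul_div_cancel₀ _ hs.ne']
  -- lower bound
  have hbdd : ∀ v : X, ∃ c : ℝ, ∀ r ∈ S v, c ≤ r := by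
    intro v
    obtain ⟨s, hs, hfin⟩ := hψz (-v)
    obtain ⟨ra, hra⟩ := WithTop.ne_top_iff_exists.mp hfin
    refine ⟨-(ra + rz) / s, ?_⟩
    rintro r ⟨t, ht, a, b, hab, hle⟩
    obtain ⟨hψa, hθb⟩ := ne_top_of_add_le hle
    obtain ⟨pa, hpa⟩ := WithTop.ne_top_iff_exists.mp hψa
    obtain ⟨pb, hpb⟩ := WithTop.ne_top_iff_exists.mp hθb
    have hst : 0 < s + t := by linarith
    set lam : ℝ := s / (s + t)
    set mu : ℝ := t / (s + t)
    have hl : 0 ≤ lam := div_nonneg hs.le hst.le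
    have hm : 0 ≤ mu := div_nonneg ht.le hst.le
    have hlm : lam + mu = 1 := by
      simp only [lam, mu]; rw [← add_div, div_self hst.ne']
    have h1 : ψ (lam • a + mu • (z₀ + s • (-v))) ≤
        ((lam * pa + mu * ra : ℝ) : WithTop ℝ) :=
      hψ lam mu _ _ _ _ hl hm hlm (le_of_eq hpa.symm) (le_of_eq hra.symm)
    have h2 : θ (lam • b + mu • z₀) ≤ ((lam * pb + mu * rz : ℝ) : WithTop ℝ) :=
      hθ lam mu _ _ _ _ hl hm hlm (le_of_eq hpb.symm) (le_of_eq hrz.symm)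
    have ha' : a = b + t • v := by rw [← hab]; abel
    have heq : lam • a + mu • (z₀ + s • (-v)) = lam • b + mu • z₀ := by
      rw [ha']
      match_scalars <;> (try simp only [lam, mu]; try field_simp; try ring)
    have hsum : (0 : WithTop ℝ) ≤ ((lam * pa + mu * ra + (lam * pb + mu * rz) : ℝ) : WithTop ℝ) := by
      calc (0 : WithTop ℝ) ≤ ψ (lam • a + mu • (z₀ + s • (-v))) +
            θ (lam • a + mu • (z₀ + s • (-v))) := hpos _
        _ ≤ _ := by
            rw [WithTop.coe_add]
            exact add_le_add h1 (heq ▸ h2)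
    have hsum' : (0 : ℝ) ≤ lam * pa + mu * ra + (lam * pb + mu * rz) := by
      exact_mod_cast hsum
    have hpab : pa + pb ≤ t * r := by
      have : ((pa + pb : ℝ) : WithTop ℝ) ≤ ((t * r : ℝ) : WithTop ℝ) := by
        rw [WithTop.coe_add, hpa, hpb]; exact hle
      exact_mod_cast this
    -- 0 ≤ lam*(pa+pb) + mu*(ra+rz) ≤ lam*t*r + mu*(ra+rz), lam*t = mu*s
    have hlt : lam * t = mu * s := by simp only [lam, mu]; field_simp
    have hmu : 0 < mu := div_pos ht hst
    have step : 0 ≤ lam * (t * r) + mu * (ra + rz) := by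
      have := mul_le_mul_of_nonneg_left hpab hl
      nlinarith
    rw [← mul_assoc, hlt, mul_assoc] at step
    have hkey : 0 ≤ s * r + (ra + rz) := by
      by_contra hcon
      push_neg at hcon
      nlinarith
    rw [div_le_iff₀ hs]
    nlinarith
  -- define p
  set p : X → ℝ := fun v => sInf (S v) with hp
  have hbddS : ∀ v, BddBelow (S v) := fun v => (hbdd v).imp fun c hc => fun r hr => hc r hr
  have hp_le : ∀ v, ∀ r ∈ S v, p v ≤ r := fun v r hr => csInf_le (hbddS v) hr
  have hp_ge : ∀ v c, (∀ r ∈ S v, c ≤ r) → c ≤ p v := fun v c h => le_csInf (hne v) h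
  -- membership combination for subadditivity
  have hadd : ∀ v w : X, ∀ r₁ ∈ S v, ∀ r₂ ∈ S w, r₁ + r₂ ∈ S (v + w) := by
    rintro v w r₁ ⟨t₁, ht₁, a₁, b₁, hab₁, hle₁⟩ r₂ ⟨t₂, ht₂, a₂, b₂, hab₂, hle₂⟩
    obtain ⟨h₁a, h₁b⟩ := ne_top_of_add_le hle₁
    obtain ⟨h₂a, h₂b⟩ := ne_top_of_add_le hle₂
    obtain ⟨pa₁, hpa₁⟩ := WithTop.ne_top_iff_exists.mp h₁a
    obtain ⟨pb₁, hpb₁⟩ := WithTop.ne_top_iff_exists.mp h₁b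
    obtain ⟨pa₂, hpa₂⟩ := WithTop.ne_top_iff_exists.mp h₂a
    obtain ⟨pb₂, hpb₂⟩ := WithTop.ne_top_iff_exists.mp h₂b
    have h₁ : pa₁ + pb₁ ≤ t₁ * r₁ := by
      exact_mod_cast (by rw [WithTop.coe_add, hpa₁, hpb₁]; exact hle₁ :
        ((pa₁ + pb₁ : ℝ) : WithTop ℝ) ≤ ((t₁ * r₁ : ℝ) : WithTop ℝ))
    have h₂ : pa₂ + pb₂ ≤ t₂ * r₂ := by
      exact_mod_cast (by rw [WithTop.coe_add, hpa₂, hpb₂]; exact hle₂ :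
        ((pa₂ + pb₂ : ℝ) : WithTop ℝ) ≤ ((t₂ * r₂ : ℝ) : WithTop ℝ))
    have h12 : 0 < t₁ + t₂ := by linarith
    set lam : ℝ := t₂ / (t₁ + t₂)
    set mu : ℝ := t₁ / (t₁ + t₂)
    have hl : 0 ≤ lam := div_nonneg ht₂.le h12.le
    have hm : 0 ≤ mu := div_nonneg ht₁.le h12.le
    have hlm : lam + mu = 1 := by
      simp only [lam, mu]; rw [← add_div, add_comm t₂ t₁, div_self h12.ne']
    set t : ℝ := t₁ * t₂ / (t₁ + t₂)
    have ht : 0 < t := div_pos (mul_pos ht₁ ht₂) h12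
    have e1 : lam * t₁ = t := by simp only [lam, t]; field_simp; try ring
    have e2 : mu * t₂ = t := by simp only [mu, t]; field_simp; try ring
    refine ⟨t, ht, lam • a₁ + mu • a₂, lam • b₁ + mu • b₂, ?_, ?_⟩
    · have hd : lam • a₁ + mu • a₂ - (lam • b₁ + mu • b₂)
          = lam • (a₁ - b₁) + mu • (a₂ - b₂) := by
        module
      rw [hd, hab₁, hab₂, smul_smul, smul_smul, e1, e2, smul_add]
    · have h1 := hψ lam mu a₁ a₂ pa₁ pa₂ hl hm hlm (le_of_eq hpa₁.symm) (le_of_eq hpa₂.symm)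
      have h2 := hθ lam mu b₁ b₂ pb₁ pb₂ hl hm hlm (le_of_eq hpb₁.symm) (le_of_eq hpb₂.symm)
      calc ψ (lam • a₁ + mu • a₂) + θ (lam • b₁ + mu • b₂)
          ≤ (((lam * pa₁ + mu * pa₂) + (lam * pb₁ + mu * pb₂) : ℝ) : WithTop ℝ) := by
            rw [WithTop.coe_add]; exact add_le_add h1 h2
        _ ≤ ((t * (r₁ + r₂) : ℝ) : WithTop ℝ) := by
            rw [WithTop.coe_le_coe]
            have c1 : lam * (pa₁ + pb₁) ≤ lam * (t₁ * r₁) := mul_le_mul_of_nonneg_left h₁ hl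
            have c2 : mu * (pa₂ + pb₂) ≤ mu * (t₂ * r₂) := mul_le_mul_of_nonneg_left h₂ hm
            have d1 : lam * (t₁ * r₁) = t * r₁ := by rw [← e1]; ring
            have d2 : mu * (t₂ * r₂) = t * r₂ := by rw [← e2]; ring
            nlinarith [c1, c2, d1, d2]
  have N_add : ∀ v w : X, p (v + w) ≤ p v + p w := by
    intro v w
    have key : ∀ r₁ ∈ S v, ∀ r₂ ∈ S w, p (v + w) ≤ r₁ + r₂ := fun r₁ h₁ r₂ h₂ =>
      hp_le _ _ (hadd v w r₁ h₁ r₂ h₂)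
    have step1 : ∀ r₂ ∈ S w, p (v + w) - r₂ ≤ p v := by
      intro r₂ h₂
      exact hp_ge v _ (fun r₁ h₁ => by linarith [key r₁ h₁ r₂ h₂])
    have step2 : p (v + w) - p w ≤ p v := by
      have : ∀ r₂ ∈ S w, p (v + w) - p v ≤ r₂ := fun r₂ h₂ => by linarith [step1 r₂ h₂]
      linarith [hp_ge w _ this]
    linarith
  have hscale : ∀ (c : ℝ), 0 < c → ∀ v, ∀ r ∈ S v, c * r ∈ S (c • v) := by
    rintro c hc v r ⟨t, ht, a, b, hab, hle⟩
    refine ⟨t / c, div_pos ht hc, a, b, ?_, ?_⟩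
    · rw [hab, smul_smul]; congr 1; field_simp
    · have : t / c * (c * r) = t * r := by field_simp
      rw [this]; exact hle
  have N_hom_le : ∀ (c : ℝ), 0 < c → ∀ v, p (c • v) ≤ c * p v := by
    intro c hc v
    have : ∀ r ∈ S v, p (c • v) ≤ c * r := fun r hr => hp_le _ _ (hscale c hc v r hr)
    have h2 : ∀ r ∈ S v, p (c • v) / c ≤ r := fun r hr => by
      rw [div_le_iff₀ hc]; linarith [this r hr, mul_comm c r]
    have := hp_ge v _ h2
    rw [div_le_iff₀ hc] at this; linarith [mul_comm (p v) c]
  have N_hom : ∀ (c : ℝ), 0 < c → ∀ v, p (c • v) = c * p v := by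
    intro c hc v
    refine le_antisymm (N_hom_le c hc v) ?_
    have := N_hom_le c⁻¹ (inv_pos.mpr hc) (c • v)
    rw [smul_smul, inv_mul_cancel₀ hc.ne', one_smul] at this
    have := mul_le_mul_of_nonneg_left this hc.le
    rw [← mul_assoc, mul_inv_cancel₀ hc.ne', one_mul] at this
    exact this
  -- p 0 ≥ 0
  have hp0 : 0 ≤ p 0 := by
    refine hp_ge 0 0 ?_
    rintro r ⟨t, ht, a, b, hab, hle⟩
    have hab' : a = b := by rwa [smul_zero, sub_eq_zero] at hab
    subst hab'
    by_contra hr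
    push_neg at hr
    have := (hpos a).trans hle
    have h0 : (0:ℝ) ≤ t * r := by exact_mod_cast this
    nlinarith
  -- Hahn–Banach
  obtain ⟨g, -, hg⟩ := exists_extension_of_le_sublinear
    ⟨⊥, 0⟩ p N_hom N_add
    (by rintro ⟨x, hx⟩
        have : x = 0 := by simpa using hx
        subst this
        simpa using hp0)
  refine ⟨g, ?_, ?_⟩
  · intro x
    rcases eq_or_ne (ψ x) ⊤ with h | h
    · rw [h]; exact le_top
    obtain ⟨rx, hrx⟩ := WithTop.ne_top_iff_exists.mp h
    have hmem : rx ∈ S x := by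
      refine ⟨1, one_pos, x, 0, by simp, ?_⟩
      rw [← hrx, hθ0, add_zero, one_mul]
    rw [← hrx, WithTop.coe_le_coe]
    exact (hg x).trans (hp_le x rx hmem)
  · intro x
    rcases eq_or_ne (θ x) ⊤ with h | h
    · rw [h]; exact le_top
    obtain ⟨rx, hrx⟩ := WithTop.ne_top_iff_exists.mp h
    have hmem : rx ∈ S (-x) := by
      refine ⟨1, one_pos, 0, x, by simp, ?_⟩
      rw [← hrx, hψ0, zero_add, one_mul]
    rw [← hrx, WithTop.coe_le_coe]
    have := (hg (-x)).trans (hp_le (-x) rx hmem)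
    rwa [map_neg] at this
    

theorem subdifferential_sum_rule {X : Type*} [AddCommGroup X] [Module ℝ X]
    (φ₁ φ₂ : X → WithTop ℝ)
    (hp₁ : ∃ x, φ₁ x ≠ ⊤) (hp₂ : ∃ x, φ₂ x ≠ ⊤)
    (hc₁ : Convex ℝ (epi φ₁)) (hc₂ : Convex ℝ (epi φ₂))
    (hqc : (algCore (epi φ₁) ∩ algCore (epi φ₂)).Nonempty) :
    ∀ xb : X, φ₁ xb ≠ ⊤ → φ₂ xb ≠ ⊤ →
      subdiff (fun x => φ₁ x + φ₂ x) xb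
        = {f | ∃ f₁ ∈ subdiff φ₁ xb, ∃ f₂ ∈ subdiff φ₂ xb, f = f₁ + f₂} := by
  intro xb h1 h2
  obtain ⟨r₁, hr₁⟩ := WithTop.ne_top_iff_exists.mp h1
  obtain ⟨r₂, hr₂⟩ := WithTop.ne_top_iff_exists.mp h2
  ext f
  simp only [Set.mem_setOf_eq]
  constructor
  · -- hard direction
    intro hf
    have hf' : ∀ x : X, ((r₁ + r₂ + f (x - xb) : ℝ) : WithTop ℝ) ≤ φ₁ x + φ₂ x := by
      intro x
      have h := hf x
      simp only [subdiff, Set.mem_setOf_eq] at h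
      rw [← hr₁, ← hr₂, ← WithTop.coe_add, ← WithTop.coe_add] at h
      exact h
    obtain ⟨⟨z, ρ⟩, ⟨⟨hz1mem, hz1core⟩, ⟨hz2mem, hz2core⟩⟩⟩ := hqc
    have hψineq : ∀ (lam mu : ℝ) (a b : X) (ra rb : ℝ), 0 ≤ lam → 0 ≤ mu → lam + mu = 1 →
        φ₁ (a + xb) + ((-(r₁ + f a) : ℝ) : WithTop ℝ) ≤ (ra : WithTop ℝ) →
        φ₁ (b + xb) + ((-(r₁ + f b) : ℝ) : WithTop ℝ) ≤ (rb : WithTop ℝ) →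
        φ₁ ((lam • a + mu • b) + xb) + ((-(r₁ + f (lam • a + mu • b)) : ℝ) : WithTop ℝ)
          ≤ ((lam * ra + mu * rb : ℝ) : WithTop ℝ) := by
      intro lam mu a b ra rb hl hm hlm ha hb
      rw [add_coe_le_coe_iff, sub_neg_eq_add] at ha hb ⊢
      have key := epi_convex_ineq hc₁ lam mu (a + xb) (b + xb) _ _ hl hm hlm ha hb
      have hpt : lam • (a + xb) + mu • (b + xb) = (lam • a + mu • b) + xb := by
        match_scalars <;> linarith [hlm]
      have hfl : f (lam • a + mu • b) = lam * f a + mu * f b := by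
        simp [map_add, map_smul, smul_eq_mul]
      have hE : lam * (ra + (r₁ + f a)) + mu * (rb + (r₁ + f b))
          = lam * ra + mu * rb + (r₁ + f (lam • a + mu • b)) := by
        rw [hfl]; linear_combination r₁ * hlm
      rw [hpt, hE] at key
      exact key
    have hθineq : ∀ (lam mu : ℝ) (a b : X) (ra rb : ℝ), 0 ≤ lam → 0 ≤ mu → lam + mu = 1 →
        φ₂ (a + xb) + ((-r₂ : ℝ) : WithTop ℝ) ≤ (ra : WithTop ℝ) →
        φ₂ (b + xb) + ((-r₂ : ℝ) : WithTop ℝ) ≤ (rb : WithTop ℝ) →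
        φ₂ ((lam • a + mu • b) + xb) + ((-r₂ : ℝ) : WithTop ℝ)
          ≤ ((lam * ra + mu * rb : ℝ) : WithTop ℝ) := by
      intro lam mu a b ra rb hl hm hlm ha hb
      rw [add_coe_le_coe_iff, sub_neg_eq_add] at ha hb ⊢
      have key := epi_convex_ineq hc₂ lam mu (a + xb) (b + xb) _ _ hl hm hlm ha hb
      have hpt : lam • (a + xb) + mu • (b + xb) = (lam • a + mu • b) + xb := by
        match_scalars <;> linarith [hlm]
      have hE : lam * (ra + r₂) + mu * (rb + r₂) = lam * ra + mu * rb + r₂ := by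
        linear_combination r₂ * hlm
      rw [hpt, hE] at key
      exact key
    have hψ0 : φ₁ ((0 : X) + xb) + ((-(r₁ + f 0) : ℝ) : WithTop ℝ) = 0 := by
      rw [zero_add, ← hr₁, map_zero, add_zero, ← WithTop.coe_add]
      norm_num
    have hθ0 : φ₂ ((0 : X) + xb) + ((-r₂ : ℝ) : WithTop ℝ) = 0 := by
      rw [zero_add, ← hr₂, ← WithTop.coe_add]
      norm_num
    have hpos : ∀ x : X, (0 : WithTop ℝ) ≤
        (φ₁ (x + xb) + ((-(r₁ + f x) : ℝ) : WithTop ℝ))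
          + (φ₂ (x + xb) + ((-r₂ : ℝ) : WithTop ℝ)) := by
      intro x
      rcases eq_or_ne (φ₁ (x + xb)) ⊤ with h | hfin₁
      · rw [h, top_add, top_add]; exact le_top
      rcases eq_or_ne (φ₂ (x + xb)) ⊤ with h | hfin₂
      · rw [h, top_add, add_top]; exact le_top
      obtain ⟨s₁, hs₁⟩ := WithTop.ne_top_iff_exists.mp hfin₁
      obtain ⟨s₂, hs₂⟩ := WithTop.ne_top_iff_exists.mp hfin₂
      have h := hf' (x + xb)
      rw [add_sub_cancel_right, ← hs₁, ← hs₂, ← WithTop.coe_add, WithTop.coe_le_coe] at h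
      rw [← hs₁, ← hs₂, ← WithTop.coe_add, ← WithTop.coe_add, ← WithTop.coe_add]
      exact_mod_cast (by linarith : (0:ℝ) ≤ s₁ + -(r₁ + f x) + (s₂ + -r₂))
    have hθzfin : φ₂ ((z - xb) + xb) + ((-r₂ : ℝ) : WithTop ℝ) ≠ ⊤ := by
      rw [sub_add_cancel]
      exact WithTop.add_ne_top.mpr ⟨ne_top_of_le_ne_top (WithTop.coe_ne_top) hz2mem,
        WithTop.coe_ne_top⟩
    have hψzfin : ∀ v : X, ∃ s : ℝ, 0 < s ∧
        φ₁ ((z - xb + s • v) + xb) + ((-(r₁ + f (z - xb + s • v)) : ℝ) : WithTop ℝ) ≠ ⊤ := by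
      intro v
      obtain ⟨δ, hδ, hδall⟩ := hz1core (v, 0)
      have hmem := hδall (δ / 2) (by rw [abs_of_pos (by linarith)]; linarith)
      have hmem' : φ₁ (z + (δ / 2) • v) ≤ ((ρ : ℝ) : WithTop ℝ) := by
        simp only [epi, Set.mem_setOf_eq, Prod.fst_add, Prod.snd_add, Prod.smul_fst,
          Prod.smul_snd, smul_eq_mul, mul_zero, add_zero] at hmem
        exact hmem
      refine ⟨δ / 2, by linarith, ?_⟩
      have harg : z - xb + (δ / 2) • v + xb = z + (δ / 2) • v := by abel
      rw [harg]
      exact WithTop.add_ne_top.mpr ⟨ne_top_of_le_ne_top (WithTop.coe_ne_top) hmem',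
        WithTop.coe_ne_top⟩
    obtain ⟨g, hg1, hg2⟩ := sandwich
      (fun x => φ₁ (x + xb) + ((-(r₁ + f x) : ℝ) : WithTop ℝ))
      (fun x => φ₂ (x + xb) + ((-r₂ : ℝ) : WithTop ℝ))
      hψineq hθineq hψ0 hθ0 hpos (z - xb) hθzfin hψzfin
    refine ⟨f + g, ?_, -g, ?_, ?_⟩
    · intro x
      have h' := hg1 (x - xb)
      simp only [sub_add_cancel] at h'
      rw [coe_le_add_coe_iff] at h'
      rw [← hr₁, ← WithTop.coe_add]
      have he : r₁ + (f + g) (x - xb) = g (x - xb) - -(r₁ + f (x - xb)) := by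
        simp only [LinearMap.add_apply]; ring
      rw [he]
      exact h'
    · intro x
      have h' := hg2 (x - xb)
      simp only [sub_add_cancel] at h'
      rw [coe_le_add_coe_iff] at h'
      rw [← hr₂, ← WithTop.coe_add]
      have he : r₂ + (-g) (x - xb) = -(g (x - xb)) - -r₂ := by
        simp only [LinearMap.neg_apply]; ring
      rw [he]
      exact h'
    · ext x
      simp only [LinearMap.add_apply, LinearMap.neg_apply]
      ring
  · -- easy direction
    rintro ⟨f₁, hf₁, f₂, hf₂, rfl⟩
    intro x
    show (φ₁ xb + φ₂ xb) + (((f₁ + f₂) (x - xb) : ℝ) : WithTop ℝ) ≤ φ₁ x + φ₂ x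
    rcases eq_or_ne (φ₁ x) ⊤ with h | hfin₁
    · rw [h, top_add]; exact le_top
    rcases eq_or_ne (φ₂ x) ⊤ with h | hfin₂
    · rw [h, add_top]; exact le_top
    obtain ⟨s₁, hs₁⟩ := WithTop.ne_top_iff_exists.mp hfin₁
    obtain ⟨s₂, hs₂⟩ := WithTop.ne_top_iff_exists.mp hfin₂
    have h₁ := hf₁ x
    have h₂ := hf₂ x
    rw [← hr₁, ← hs₁, ← WithTop.coe_add, WithTop.coe_le_coe] at h₁
    rw [← hr₂, ← hs₂, ← WithTop.coe_add, WithTop.coe_le_coe] at h₂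
    rw [← hr₁, ← hr₂, ← hs₁, ← hs₂, ← WithTop.coe_add, ← WithTop.coe_add, ← WithTop.coe_add,
      WithTop.coe_le_coe, LinearMap.add_apply]
    linarith
end

section
/- (Coderivative chain rule.) Let X, Y, Z be real vector spaces and F : X ⇉ Y, G : Y ⇉ Z set-valued mappings with convex graphs such that there exists (x, y, z) ∈ X × Y × Z with (x,y) ∈ core(gph(F)) and (y,z) ∈ core(gph(G)). Then for every (x̄, z̄) ∈ gph(G∘F), every linear h : Z → ℝ, and every ȳ ∈ F(x̄) ∩ G⁻¹(z̄), one has D*(G∘F)(x̄,z̄)(h) = (D*F(x̄,ȳ) ∘ D*G(ȳ,z̄))(h), i.e., f ∈ D*(G∘F)(x̄,z̄)(h) iff there exists a linear g : Y → ℝ with g ∈ D*G(ȳ,z̄)(h) and f ∈ D*F(x̄,ȳ)(g). -/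
/-- The composition of set-valued mappings. -/
def svComp {X Y Z : Type*} (G : Y → Set Z) (F : X → Set Y) : X → Set Z :=
  fun x => {z | ∃ y ∈ F x, z ∈ G y}

/-- A convex cone with the origin adjoined, as a pointed cone. -/
def coneAddZero {E : Type*} [AddCommGroup E] [Module ℝ E] (K : ConvexCone ℝ E) :
    PointedCone ℝ E :=
  ConvexCone.toPointedCone
    { carrier := {x | x = 0 ∨ x ∈ K}
      smul_mem' := by
        rintro c hc x (hx | hx)
        · left; rw [hx, smul_zero]
        · right; exact K.smul_mem hc hx
      add_mem' := by
        rintro x (hx | hx) y (hy | hy)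
        · left; rw [hx, hy, add_zero]
        · right; rw [hx, zero_add]; exact hy
        · right; rw [hy, add_zero]; exact hx
        · right; exact K.add_mem hx hy } (Or.inl rfl)

/-- Auxiliary separation lemma: if `C ⊆ Y × ℝ` is convex, meets the vertical axis only at
positive heights, and satisfies a density condition, then there is a linear functional
nonnegative on `C` and equal to `1` on `(0, 1)`. -/
lemma aux_sep {Y : Type*} [AddCommGroup Y] [Module ℝ Y] {C : Set (Y × ℝ)}
    (hC : Convex ℝ C) (h0 : ∀ r : ℝ, ((0 : Y), r) ∈ C → 0 < r)
    (hdense : ∀ p : Y × ℝ, ∃ t : ℝ, ∃ τ : ℝ, 0 < τ ∧ τ • (((0 : Y), t) + p) ∈ C) :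
    ∃ ℓ : (Y × ℝ) →ₗ[ℝ] ℝ, ℓ ((0 : Y), (1 : ℝ)) = 1 ∧ ∀ p ∈ C, 0 ≤ ℓ p := by
  have hene : ((0 : Y), (1 : ℝ)) ≠ (0 : Y × ℝ) := by simp [Prod.ext_iff]
  have hnonneg : ∀ x : (LinearPMap.mkSpanSingleton (K := ℝ) (σ := RingHom.id ℝ)
        ((0 : Y), (1 : ℝ)) (1 : ℝ) hene).domain,
      (x : Y × ℝ) ∈ coneAddZero (hC.toCone C) →
      0 ≤ LinearPMap.mkSpanSingleton (K := ℝ) (σ := RingHom.id ℝ) ((0 : Y), (1 : ℝ)) (1 : ℝ) hene x := by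
    intro x hxs
    rcases (show (x : Y × ℝ) = 0 ∨ (x : Y × ℝ) ∈ hC.toCone C from hxs) with hx0 | hxs
    · rw [show x = 0 from Subtype.ext hx0, LinearPMap.map_zero]
    obtain ⟨c, hc⟩ := Submodule.mem_span_singleton.1 x.2
    have hxe : x = ⟨c • ((0 : Y), (1 : ℝ)),
        Submodule.smul_mem _ c (Submodule.mem_span_singleton_self _)⟩ := Subtype.ext hc.symm
    rw [hxe, LinearPMap.mkSpanSingleton'_apply, smul_eq_mul, mul_one]
    obtain ⟨d, hd, hdC⟩ := hC.mem_toCone'.1 hxs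
    have hmem : ((0 : Y), d * c) ∈ C := by
      rw [← hc] at hdC
      simpa [Prod.smul_mk, smul_eq_mul] using hdC
    rcases mul_pos_iff.mp (h0 _ hmem) with ⟨-, hcpos⟩ | ⟨hdneg, -⟩
    · exact hcpos.le
    · linarith
  have hdense' : ∀ p : Y × ℝ, ∃ x : (LinearPMap.mkSpanSingleton (K := ℝ) (σ := RingHom.id ℝ)
        ((0 : Y), (1 : ℝ)) (1 : ℝ) hene).domain, (x : Y × ℝ) + p ∈ coneAddZero (hC.toCone C) := by
    intro p
    obtain ⟨t, τ, hτ, hmem⟩ := hdense p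
    refine ⟨⟨((0 : Y), t), Submodule.mem_span_singleton.2 ⟨t, by simp [Prod.ext_iff]⟩⟩, ?_⟩
    exact Or.inr (hC.mem_toCone'.2 ⟨τ, hτ, hmem⟩)
  obtain ⟨ℓ, hℓeq, hℓpos⟩ := riesz_extension (coneAddZero (hC.toCone C)) _ hnonneg hdense'
  refine ⟨ℓ, ?_, fun p hp => hℓpos p (Or.inr (hC.subset_toCone hp))⟩
  have := hℓeq ⟨((0 : Y), (1 : ℝ)), Submodule.mem_span_singleton_self _⟩
  rw [this]
  exact LinearPMap.mkSpanSingleton_apply ℝ ℝ hene 1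

theorem coderivative_chain_rule {X Y Z : Type*} [AddCommGroup X] [Module ℝ X]
    [AddCommGroup Y] [Module ℝ Y] [AddCommGroup Z] [Module ℝ Z]
    (F : X → Set Y) (G : Y → Set Z)
    (hF : Convex ℝ (gph F)) (hG : Convex ℝ (gph G))
    (hqc : ∃ (x : X) (y : Y) (z : Z),
      (x, y) ∈ algCore (gph F) ∧ (y, z) ∈ algCore (gph G)) :
    ∀ xb : X, ∀ zb : Z, zb ∈ svComp G F xb → ∀ h : Z →ₗ[ℝ] ℝ,
      ∀ yb : Y, yb ∈ F xb → zb ∈ G yb →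
        coderiv (svComp G F) xb zb h
          = {f | ∃ g : Y →ₗ[ℝ] ℝ, g ∈ coderiv G yb zb h ∧ f ∈ coderiv F xb yb g} := by
  intro xb zb hzb h yb hyF hzG
  ext f
  constructor
  · -- hard direction
    rintro ⟨-, hfle⟩
    obtain ⟨x0, y0, z0, ⟨hF0, _⟩, ⟨hG0, hGcore⟩⟩ := hqc
    -- the convex set C
    set C : Set (Y × ℝ) := {p | ∃ x₁ y₁ y₂ z₂, y₁ ∈ F x₁ ∧ z₂ ∈ G y₂ ∧
        p.1 = y₂ - y₁ ∧ h (z₂ - zb) - f (x₁ - xb) < p.2} with hCdef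
    have hCconv : Convex ℝ C := by
      rintro ⟨v, t⟩ ⟨x₁, y₁, y₂, z₂, h1, h2, hv, ht⟩
        ⟨v', t'⟩ ⟨x₁', y₁', y₂', z₂', h1', h2', hv', ht'⟩ a b ha hb hab
      dsimp only at hv hv' ht ht'
      have hFm : (a • x₁ + b • x₁', a • y₁ + b • y₁') ∈ gph F := by
        have := hF (x := (x₁, y₁)) (y := (x₁', y₁')) h1 h1' ha hb hab
        simpa [Prod.smul_mk, Prod.mk_add_mk] using this
      have hGm : (a • y₂ + b • y₂', a • z₂ + b • z₂') ∈ gph G := by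
        have := hG (x := (y₂, z₂)) (y := (y₂', z₂')) h2 h2' ha hb hab
        simpa [Prod.smul_mk, Prod.mk_add_mk] using this
      refine ⟨a • x₁ + b • x₁', a • y₁ + b • y₁', a • y₂ + b • y₂', a • z₂ + b • z₂',
        hFm, hGm, ?_, ?_⟩
      · show a • v + b • v' = _
        rw [hv, hv']
        module
      · show h (a • z₂ + b • z₂' - zb) - f (a • x₁ + b • x₁' - xb) < a • t + b • t'
        have hzb1 : a • zb + b • zb = zb := by rw [← add_smul, hab, one_smul]
        have hxb1 : a • xb + b • xb = xb := by rw [← add_smul, hab, one_smul]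
        have hz : a • z₂ + b • z₂' - zb = a • (z₂ - zb) + b • (z₂' - zb) := by
          conv_lhs => rw [← hzb1]
          rw [smul_sub, smul_sub]; abel
        have hx : a • x₁ + b • x₁' - xb = a • (x₁ - xb) + b • (x₁' - xb) := by
          conv_lhs => rw [← hxb1]
          rw [smul_sub, smul_sub]; abel
        rw [hz, hx, map_add, map_add, map_smul, map_smul, map_smul, map_smul]
        simp only [smul_eq_mul]
        rcases eq_or_lt_of_le ha with ha0 | ha0
        · rw [← ha0] at hab ⊢
          simp only [zero_mul, zero_add] at hab ⊢
          rw [hab, one_mul, one_mul]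
          linarith
        · have hb' : b * (h (z₂' - zb) - f (x₁' - xb)) ≤ b * t' :=
            mul_le_mul_of_nonneg_left ht'.le hb
          have ha' : a * (h (z₂ - zb) - f (x₁ - xb)) < a * t :=
            (mul_lt_mul_iff_right₀ ha0).2 ht
          nlinarith
    have hC0 : ∀ r : ℝ, ((0 : Y), r) ∈ C → 0 < r := by
      rintro r ⟨x₁, y₁, y₂, z₂, h1, h2, hv, ht⟩
      have hy : y₂ = y₁ := by
        have h5 : (0 : Y) = y₂ - y₁ := hv
        have : y₂ - y₁ = 0 := h5.symm
        rw [sub_eq_zero] at this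
        exact this
      have hzc : z₂ ∈ svComp G F x₁ := ⟨y₁, h1, hy ▸ h2⟩
      have := hfle x₁ z₂ hzc
      simp only at ht
      linarith
    have hdense : ∀ p : Y × ℝ, ∃ t : ℝ, ∃ τ : ℝ, 0 < τ ∧ τ • (((0 : Y), t) + p) ∈ C := by
      rintro ⟨u, r⟩
      obtain ⟨δ, hδ, hδmem⟩ := hGcore (u, (0 : Z))
      set τ : ℝ := min δ (|r| + 1)⁻¹ / 2 with hτdef
      have hτpos : 0 < τ := by
        have : (0:ℝ) < (|r| + 1)⁻¹ := by positivity
        have := lt_min hδ this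
        positivity
      have hτδ : |τ| < δ := by
        rw [abs_of_pos hτpos]
        have : τ ≤ δ / 2 := by
          rw [hτdef]
          have := min_le_left δ (|r| + 1)⁻¹
          linarith
        linarith
      have hτr : τ * |r| < 1 := by
        have h1 : τ ≤ (|r| + 1)⁻¹ / 2 := by
          rw [hτdef]
          have := min_le_right δ (|r| + 1)⁻¹
          linarith
        have h2 : (0:ℝ) < |r| + 1 := by positivity
        have h3 : τ * (|r| + 1) ≤ (|r| + 1)⁻¹ / 2 * (|r| + 1) :=
          mul_le_mul_of_nonneg_right h1 h2.le
        have h5 : (|r| + 1)⁻¹ / 2 * (|r| + 1) = 1 / 2 := by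
          field_simp
        nlinarith [abs_nonneg r]
      have hGy : z0 ∈ G (y0 + τ • u) := by
        have := hδmem τ hτδ
        simpa [gph, Prod.smul_mk, Prod.mk_add_mk] using this
      set K : ℝ := h (z0 - zb) - f (x0 - xb) with hKdef
      set tval : ℝ := (|K| + 1) / τ - r + |r| with htvaldef
      refine ⟨tval, τ, hτpos, ?_⟩
      have hpt : ((0 : Y), tval) + (u, r) = ((u, tval + r) : Y × ℝ) := by
        simp [Prod.ext_iff]
      rw [hpt]
      refine ⟨x0, y0, y0 + τ • u, z0, hF0, hGy, ?_, ?_⟩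
      · show (τ • ((u, tval + r) : Y × ℝ)).1 = y0 + τ • u - y0
        simp [Prod.smul_mk]
      · show K < (τ • ((u, tval + r) : Y × ℝ)).2
        simp only [Prod.smul_mk, smul_eq_mul]
        rw [htvaldef]
        have hτne : τ ≠ 0 := hτpos.ne'
        have hexp : τ * ((|K| + 1) / τ - r + |r| + r) = |K| + 1 + τ * |r| := by
          field_simp
          ring
        rw [hexp]
        have h1 : K ≤ |K| := le_abs_self K
        have h2 : 0 ≤ τ * |r| := mul_nonneg hτpos.le (abs_nonneg r)
        linarith
    obtain ⟨ℓ, hℓe, hℓpos⟩ := aux_sep hCconv hC0 hdense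
    have hdecomp : ∀ (v : Y) (t : ℝ), ℓ (v, t) = ℓ (v, 0) + t := by
      intro v t
      have heq : ((v, t) : Y × ℝ) = (v, 0) + t • ((0 : Y), (1 : ℝ)) := by
        simp [Prod.ext_iff]
      rw [heq, map_add, map_smul, hℓe, smul_eq_mul, mul_one]
    have hkey : ∀ x₁ y₁ y₂ z₂, y₁ ∈ F x₁ → z₂ ∈ G y₂ →
        0 ≤ ℓ (y₂ - y₁, 0) + (h (z₂ - zb) - f (x₁ - xb)) := by
      intro x₁ y₁ y₂ z₂ h1 h2
      have hε : ∀ ε : ℝ, 0 < ε →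
          0 ≤ ℓ (y₂ - y₁, 0) + (h (z₂ - zb) - f (x₁ - xb)) + ε := by
        intro ε hεpos
        have hmem : ((y₂ - y₁, h (z₂ - zb) - f (x₁ - xb) + ε) : Y × ℝ) ∈ C := by
          refine ⟨x₁, y₁, y₂, z₂, h1, h2, rfl, ?_⟩
          show h (z₂ - zb) - f (x₁ - xb) < h (z₂ - zb) - f (x₁ - xb) + ε
          linarith
        have := hℓpos _ hmem
        rwa [hdecomp, ← add_assoc] at this
      by_contra hcon
      push_neg at hcon
      have := hε (-(ℓ (y₂ - y₁, 0) + (h (z₂ - zb) - f (x₁ - xb))) / 2) (by linarith)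
      linarith
    set g : Y →ₗ[ℝ] ℝ := -(ℓ ∘ₗ LinearMap.inl ℝ Y ℝ) with hgdef
    have hgval : ∀ v : Y, g v = -ℓ (v, 0) := by
      intro v
      simp [hgdef]
    refine ⟨g, ⟨hzG, ?_⟩, ⟨hyF, ?_⟩⟩
    · intro y z hz
      have := hkey xb yb y z hyF hz
      rw [hgval]
      simp only [sub_self, map_zero] at this
      linarith
    · intro x y hy
      have hk := hkey x y yb zb hy hzG
      have hswap : ℓ (yb - y, 0) = -ℓ (y - yb, 0) := by
        rw [← map_neg]
        congr 1
        simp [Prod.ext_iff, neg_sub]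
      rw [hgval]
      rw [hswap] at hk
      simp only [sub_self, map_zero] at hk
      linarith
  · -- easy direction
    rintro ⟨g, ⟨hzbG, hgle⟩, ⟨hybF, hfle⟩⟩
    refine ⟨⟨yb, hyF, hzG⟩, ?_⟩
    rintro x z ⟨y, hyFx, hzGy⟩
    have h1 := hfle x y hyFx
    have h2 := hgle y z hzGy
    linarith
end
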